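/- arXiv:1911.02328 — 10 statements merged into one kernel-verified Lean document; each statement's English description precedes it below -/
import Mathlib

section
/- Let R be a Dedekind domain with torsion ideal class group such that G_1(R) is dense in the Golomb space G(R). Then for every n ≥ 2 the set G_n(R) is dense in G(R). -/
open Polynomial Filter

noncomputable section

/-- The Golomb space of a domain: the nonzero elements. -/
abbrev GolombSpace (R : Type*) [CommRing R] := {x : R // x ≠ 0}

/-- The Golomb topology: generated by coprime cosets `x + I`. -/
instance golombTopology (R : Type*) [CommRing R] : TopologicalSpace (GolombSpace R) :=
  TopologicalSpace.generateFrom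
    {S : Set (GolombSpace R) | ∃ (x : R) (I : Ideal R), x ≠ 0 ∧ I ≠ ⊥ ∧
      Ideal.span {x} ⊔ I = ⊤ ∧ S = {y : GolombSpace R | ∃ i ∈ I, (y : R) = x + i}}

/-- `G_n(R)`: nonzero elements contained in exactly `n` maximal ideals. -/
def golombGn (R : Type*) [CommRing R] (n : ℕ) : Set (GolombSpace R) :=
  {x | ∃ Δ : Finset (Ideal R), Δ.card = n ∧ (∀ P ∈ Δ, P.IsMaximal) ∧
    (∀ P : Ideal R, P.IsMaximal → ((x : R) ∈ P ↔ P ∈ Δ))}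

/-- The `P`-topology on `R ∖ P`, generated by the cosets `a + Pⁿ`, `n ≥ 1`. -/
instance padicCosetTopology {R : Type*} [CommRing R] (P : Ideal R) :
    TopologicalSpace {x : R // x ∉ P} :=
  TopologicalSpace.generateFrom
    {S : Set {x : R // x ∉ P} | ∃ (a : R) (n : ℕ), a ∉ P ∧ 1 ≤ n ∧
      S = {y : {x : R // x ∉ P} | ∃ b ∈ P ^ n, (y : R) = a + b}}

/-- Convergence of a sequence to `l` in the `P`-topology on `R ∖ P`. -/
def PTendsto {R : Type*} [CommRing R] (P : Ideal R) (s : ℕ → R) (l : R) : Prop :=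
  ∃ (hl : l ∉ P) (hs : ∀ n, s n ∉ P),
    Filter.Tendsto (fun n => (⟨s n, hs n⟩ : {x : R // x ∉ P})) Filter.atTop
      (nhds (⟨l, hl⟩ : {x : R // x ∉ P}))

/-- `⟨a⟩ = { u·aⁿ : u a unit, n ≥ 1 }`, as a subset of the Golomb space. -/
def golombPow {R : Type*} [CommRing R] (a : R) : Set (GolombSpace R) :=
  {y | ∃ (u : R) (n : ℕ), IsUnit u ∧ 1 ≤ n ∧ (y : R) = u * a ^ n}


section Aux

variable {R : Type*} [CommRing R] [IsDomain R]

lemma golomb_coset_isOpen {z : R} (hz : z ≠ 0) {I : Ideal R} (hI : I ≠ ⊥)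
    (hcop : Ideal.span {z} ⊔ I = ⊤) :
    IsOpen {y : GolombSpace R | ∃ i ∈ I, (y : R) = z + i} :=
  TopologicalSpace.isOpen_generateFrom_of_mem ⟨z, I, hz, hI, hcop, rfl⟩

lemma golomb_exists_coset {U : Set (GolombSpace R)} (hU : IsOpen U) :
    ∀ z ∈ U, ∃ I : Ideal R, I ≠ ⊥ ∧ Ideal.span {(z : R)} ⊔ I = ⊤ ∧
      {y : GolombSpace R | ∃ i ∈ I, (y : R) = (z : R) + i} ⊆ U := by
  have h : TopologicalSpace.GenerateOpen _ U := hU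
  clear hU
  induction h with
  | basic S hS =>
      rintro z hzS
      obtain ⟨x, I, hx, hI, hcop, rfl⟩ := hS
      obtain ⟨i, hi, hzi⟩ := hzS
      refine ⟨I, hI, ?_, ?_⟩
      · rw [eq_top_iff, ← hcop]
        refine sup_le ?_ le_sup_right
        rw [Ideal.span_le, Set.singleton_subset_iff]
        have : x = (z : R) - i := by rw [hzi]; ring
        rw [this]
        exact Submodule.sub_mem _
          (le_sup_left (a := Ideal.span {(z : R)}) (Ideal.subset_span rfl))
          (le_sup_right (b := I) hi)
      · rintro y ⟨j, hj, hyj⟩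
        exact ⟨i + j, I.add_mem hi hj, by rw [hyj, hzi]; ring⟩
  | univ =>
      intro z _
      refine ⟨⊤, ?_, sup_top_eq _, fun y _ => trivial⟩
      exact top_ne_bot
  | inter U V hU hV ihU ihV =>
      intro z hz
      obtain ⟨I, hI, hcI, hsI⟩ := ihU z hz.1
      obtain ⟨J, hJ, hcJ, hsJ⟩ := ihV z hz.2
      refine ⟨I * J, ?_, ?_, ?_⟩
      · rw [Ne, Ideal.mul_eq_bot]; tauto
      · rw [← Ideal.isCoprime_iff_sup_eq] at hcI hcJ ⊢
        exact hcI.mul_right hcJ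
      · rintro y ⟨k, hk, hyk⟩
        exact ⟨hsI ⟨k, Ideal.mul_le_left hk, hyk⟩, hsJ ⟨k, Ideal.mul_le_right hk, hyk⟩⟩
  | sUnion S hS ih =>
      intro z hz
      obtain ⟨t, ht, hzt⟩ := hz
      obtain ⟨I, hI, hc, hs⟩ := ih t ht z hzt
      exact ⟨I, hI, hc, hs.trans (Set.subset_sUnion_of_mem ht)⟩

lemma golombGn_exists (hdense : Dense (golombGn R 1)) :
    ∀ m : ℕ, 1 ≤ m → ∀ (z : GolombSpace R) (I : Ideal R), I ≠ ⊥ →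
      Ideal.span {(z : R)} ⊔ I = ⊤ →
      ∃ y ∈ golombGn R m, ∃ i ∈ I, (y : R) = (z : R) + i := by
  classical
  have base : ∀ (z : GolombSpace R) (I : Ideal R), I ≠ ⊥ →
      Ideal.span {(z : R)} ⊔ I = ⊤ →
      ∃ y ∈ golombGn R 1, ∃ i ∈ I, (y : R) = (z : R) + i := by
    intro z I hI hcop
    have hopen := golomb_coset_isOpen z.2 hI hcop
    have hne : {y : GolombSpace R | ∃ i ∈ I, (y : R) = (z : R) + i}.Nonempty :=
      ⟨z, 0, I.zero_mem, by ring⟩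
    obtain ⟨y, hyC, hy1⟩ := hdense.inter_open_nonempty _ hopen hne
    exact ⟨y, hy1, hyC⟩
  intro m hm
  induction m, hm using Nat.le_induction with
  | base => exact base
  | succ m hm ih =>
      intro z I hI hcop
      obtain ⟨y, ⟨Δ, hcard, hmax, hiff⟩, i, hi, hyi⟩ := ih z I hI hcop
      set J : Ideal R := I * ∏ P ∈ Δ, P with hJdef
      have hPbot : ∀ P ∈ Δ, P ≠ ⊥ := by
        intro P hP hbot
        exact y.2 (by simpa [hbot] using (hiff P (hmax P hP)).mpr hP)
      have hJbot : J ≠ ⊥ := by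
        rw [hJdef, Ne, Ideal.mul_eq_bot]
        push_neg
        refine ⟨hI, ?_⟩
        rw [← Ideal.zero_eq_bot, Finset.prod_ne_zero_iff]
        intro P hP
        rw [Ideal.zero_eq_bot]
        exact hPbot P hP
      have hone : ((⟨1, one_ne_zero⟩ : GolombSpace R) : R) = (1 : R) := rfl
      have hcop1 : Ideal.span {((⟨1, one_ne_zero⟩ : GolombSpace R) : R)} ⊔ J = ⊤ := by
        rw [hone, Ideal.span_singleton_one, top_sup_eq]
      obtain ⟨q, ⟨Δq, hqcard, hqmax, hqiff⟩, j, hj, hqj⟩ := base ⟨1, one_ne_zero⟩ J hJbot hcop1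
      obtain ⟨Q, hQ⟩ := Finset.card_eq_one.mp hqcard
      subst hQ
      have hQmax : Q.IsMaximal := hqmax Q (Finset.mem_singleton_self Q)
      have hqQ : ∀ P : Ideal R, P.IsMaximal → ((q : R) ∈ P ↔ P = Q) := by
        intro P hP
        rw [hqiff P hP, Finset.mem_singleton]
      have hQΔ : Q ∉ Δ := by
        intro hQΔ
        have hJQ : J ≤ Q := le_trans Ideal.mul_le_right (by
          rw [← Finset.mul_prod_erase Δ _ hQΔ]
          exact Ideal.mul_le_left)
        have h1Q : (1 : R) ∈ Q := by
          have hqQ' : (q : R) ∈ Q := (hqQ Q hQmax).mpr rfl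
          have : (q : R) - j ∈ Q := Submodule.sub_mem _ hqQ' (hJQ hj)
          simpa [hqj] using this
        exact hQmax.ne_top (Ideal.eq_top_of_isUnit_mem _ h1Q isUnit_one)
      have hy'ne : (y : R) * (q : R) ≠ 0 := mul_ne_zero y.2 q.2
      refine ⟨⟨(y : R) * (q : R), hy'ne⟩, ⟨insert Q Δ, ?_, ?_, ?_⟩, i + (y : R) * j, ?_, ?_⟩
      · rw [Finset.card_insert_of_notMem hQΔ, hcard]
      · intro P hP
        rcases Finset.mem_insert.mp hP with h | h
        · exact h ▸ hQmax
        · exact hmax P h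
      · intro P hP
        have hprime : P.IsPrime := hP.isPrime
        constructor
        · intro hmem
          rcases hprime.mem_or_mem hmem with h | h
          · exact Finset.mem_insert_of_mem ((hiff P hP).mp h)
          · exact Finset.mem_insert.mpr (Or.inl ((hqQ P hP).mp h))
        · intro hmem
          rcases Finset.mem_insert.mp hmem with h | h
          · exact h ▸ Ideal.mul_mem_left _ _ ((hqQ Q hQmax).mpr rfl)
          · exact Ideal.mul_mem_right _ _ ((hiff P hP).mpr h)
      · exact I.add_mem hi (Ideal.mul_mem_left _ _ (Ideal.mul_le_left hj))
      · show (y : R) * (q : R) = (z : R) + (i + (y : R) * j)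
        rw [hqj, hyi]; ring

end Aux

/-- If `R` is a Dedekind domain with torsion class group such that `G₁(R)` is
dense in the Golomb space `G(R)`, then `G_n(R)` is dense in `G(R)` for every `n ≥ 2`. -/
theorem golombGn_dense (R : Type*) [CommRing R] [IsDomain R] [IsDedekindDomain R]
    (htors : ∀ c : ClassGroup R, IsOfFinOrder c)
    (hdense : Dense (golombGn R 1)) (n : ℕ) (hn : 2 ≤ n) :
    Dense (golombGn R n) := by
  rw [dense_iff_inter_open]
  rintro U hU ⟨z, hz⟩
  obtain ⟨I, hI, hcop, hsub⟩ := golomb_exists_coset hU z hz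
  obtain ⟨y, hyG, i, hi, hyi⟩ :=
    golombGn_exists hdense n (le_trans one_le_two hn) z I hI hcop
  exact ⟨y, hsub ⟨i, hi, hyi⟩, hyG⟩

end
end

section
/- Let R be a Dedekind domain with torsion ideal class group such that G_1(R) is dense in the Golomb space G(R). Then for every n ≥ 2 the subspace G_n(R) of G(R) is not a regular topological space. -/
open Polynomial Filter
open scoped nonZeroDivisors

noncomputable section

/-! ### Auxiliary material for the proof -/

section GolombAux

variable {R : Type*} [CommRing R] [IsDomain R]

/-- A basic (coprime) coset in the Golomb space. -/
def gcoset (w : R) (I : Ideal R) : Set (GolombSpace R) :=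
  {y : GolombSpace R | ∃ i ∈ I, (y : R) = w + i}

/-- The generating family of the Golomb topology. -/
def gBasis (R : Type*) [CommRing R] : Set (Set (GolombSpace R)) :=
  {S : Set (GolombSpace R) | ∃ (x : R) (I : Ideal R), x ≠ 0 ∧ I ≠ ⊥ ∧
      Ideal.span {x} ⊔ I = ⊤ ∧ S = {y : GolombSpace R | ∃ i ∈ I, (y : R) = x + i}}

lemma cop_iff {x : R} {I : Ideal R} :
    Ideal.span {x} ⊔ I = ⊤ ↔ ∀ P : Ideal R, P.IsMaximal → I ≤ P → x ∉ P := by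
  constructor
  · intro h P hP hIP hxP
    have hle : Ideal.span {x} ⊔ I ≤ P :=
      sup_le ((Ideal.span_singleton_le_iff_mem P).2 hxP) hIP
    rw [h] at hle
    exact hP.ne_top (top_le_iff.mp hle)
  · intro h
    by_contra hne
    obtain ⟨P, hP, hle⟩ := Ideal.exists_le_maximal _ hne
    exact h P hP (le_trans le_sup_right hle)
      (hle (Submodule.mem_sup_left (Ideal.mem_span_singleton_self x)))

lemma cop_of_sub_mem {x w : R} {I : Ideal R} (hcop : Ideal.span {x} ⊔ I = ⊤)
    (hw : w - x ∈ I) : Ideal.span {w} ⊔ I = ⊤ := by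
  rw [cop_iff] at hcop ⊢
  intro P hP hIP hwP
  exact hcop P hP hIP (by simpa using P.sub_mem hwP (hIP hw))

lemma cop_of_notMem {x : R} {P : Ideal R} (hP : P.IsMaximal) (hx : x ∉ P) :
    Ideal.span {x} ⊔ P = ⊤ := by
  rw [cop_iff]
  intro Q hQ hPQ hxQ
  exact hx ((hP.eq_of_le hQ.ne_top hPQ) ▸ hxQ)

lemma ne_bot_of_pow_eq_span {P : Ideal R} {m : ℕ} {p : R} (hm : 1 ≤ m) (hp : p ≠ 0)
    (hpow : P ^ m = Ideal.span {p}) : P ≠ ⊥ := by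
  intro h
  rw [h, ← Submodule.zero_eq_bot, zero_pow (Nat.one_le_iff_ne_zero.mp hm)] at hpow
  exact hp (Ideal.span_singleton_eq_bot.mp (hpow.symm.trans Submodule.zero_eq_bot))

lemma gBasis_isBasis : TopologicalSpace.IsTopologicalBasis (gBasis R) := by
  refine ⟨?_, ?_, rfl⟩
  · rintro t₁ ⟨x₁, I₁, hx₁, hI₁, hc₁, rfl⟩ t₂ ⟨x₂, I₂, hx₂, hI₂, hc₂, rfl⟩ w
      ⟨⟨i₁, hi₁, he₁⟩, ⟨i₂, hi₂, he₂⟩⟩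
    have hw1 : (w : R) - x₁ ∈ I₁ := by rw [he₁]; simpa using hi₁
    have hw2 : (w : R) - x₂ ∈ I₂ := by rw [he₂]; simpa using hi₂
    have hmulbot : I₁ * I₂ ≠ ⊥ := by
      simp only [ne_eq, Ideal.mul_eq_bot]; tauto
    have hinf : I₁ ⊓ I₂ ≠ ⊥ := fun h =>
      hmulbot (le_bot_iff.mp (h ▸ Ideal.mul_le_inf))
    have hcop : Ideal.span {(w : R)} ⊔ (I₁ ⊓ I₂) = ⊤ := by
      rw [cop_iff]
      intro P hP hle hwP
      have hPP : I₁ * I₂ ≤ P := le_trans Ideal.mul_le_inf hle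
      rcases hP.isPrime.mul_le.mp hPP with h | h
      · exact cop_iff.mp (cop_of_sub_mem hc₁ hw1) P hP h hwP
      · exact cop_iff.mp (cop_of_sub_mem hc₂ hw2) P hP h hwP
    refine ⟨gcoset (w : R) (I₁ ⊓ I₂), ⟨w, I₁ ⊓ I₂, w.2, hinf, hcop, rfl⟩,
      ⟨0, zero_mem _, (add_zero _).symm⟩, ?_⟩
    rintro y ⟨i, hi, hyi⟩
    constructor
    · exact ⟨i₁ + i, I₁.add_mem hi₁ hi.1, by rw [hyi, he₁]; ring⟩
    · exact ⟨i₂ + i, I₂.add_mem hi₂ hi.2, by rw [hyi, he₂]; ring⟩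
  · apply Set.eq_univ_of_forall
    intro w
    refine Set.mem_sUnion.mpr ⟨{y : GolombSpace R | ∃ i ∈ (⊤ : Ideal R), (y : R) = 1 + i},
      ⟨1, ⊤, one_ne_zero, ?_, by simp, rfl⟩, ⟨(w : R) - 1, trivial, by ring⟩⟩
    intro h
    have h1 : (1 : R) ∈ (⊥ : Ideal R) := h ▸ Submodule.mem_top
    exact one_ne_zero (Ideal.mem_bot.mp h1)

lemma gcoset_isOpen {w : R} {I : Ideal R} (hw : w ≠ 0) (hI : I ≠ ⊥)
    (hc : Ideal.span {w} ⊔ I = ⊤) : IsOpen (gcoset w I) :=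
  TopologicalSpace.isOpen_generateFrom_of_mem ⟨w, I, hw, hI, hc, rfl⟩

lemma exists_coset_subset {w : GolombSpace R} {S : Set (GolombSpace R)} (hS : S ∈ nhds w) :
    ∃ I : Ideal R, I ≠ ⊥ ∧ Ideal.span {(w : R)} ⊔ I = ⊤ ∧ gcoset (w : R) I ⊆ S := by
  obtain ⟨t, ⟨x, I, hx, hI, hc, rfl⟩, hwt, hts⟩ := gBasis_isBasis.mem_nhds_iff.mp hS
  obtain ⟨i0, hi0, he⟩ := hwt
  have hw : (w : R) - x ∈ I := by rw [he]; simpa using hi0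
  refine ⟨I, hI, cop_of_sub_mem hc hw, ?_⟩
  rintro y ⟨i, hi, hyi⟩
  exact hts ⟨i0 + i, I.add_mem hi0 hi, by rw [hyi, he]; ring⟩

lemma crt2 {A B : Ideal R} (h : A ⊔ B = ⊤) (a b : R) :
    ∃ z : R, z - a ∈ A ∧ z - b ∈ B := by
  have h1 : (1 : R) ∈ A ⊔ B := h ▸ Submodule.mem_top
  obtain ⟨e, he, f, hf, hef⟩ := Submodule.mem_sup.mp h1
  refine ⟨a * f + b * e, ?_, ?_⟩
  · have key : a * f + b * e - a = (b - a) * e := by linear_combination a * hef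
    rw [key]; exact A.mul_mem_left _ he
  · have key : a * f + b * e - b = (a - b) * f := by linear_combination b * hef
    rw [key]; exact B.mul_mem_left _ hf

/-- From density of `G₁`, every coprime coset contains an element with exactly one
maximal ideal, and that maximal ideal does not contain the modulus. -/
lemma exists_G1_elt (hdense : Dense (golombGn R 1)) {w : R} {I : Ideal R}
    (hw : w ≠ 0) (hI : I ≠ ⊥) (hc : Ideal.span {w} ⊔ I = ⊤) :
    ∃ (t : R) (P : Ideal R), t ≠ 0 ∧ t - w ∈ I ∧ P.IsMaximal ∧ ¬I ≤ P ∧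
      (∀ Q : Ideal R, Q.IsMaximal → (t ∈ Q ↔ Q = P)) := by
  have hopen := gcoset_isOpen hw hI hc
  have hne : (gcoset w I).Nonempty := ⟨⟨w, hw⟩, 0, zero_mem _, (add_zero _).symm⟩
  obtain ⟨tt, htc, htG⟩ := hdense.inter_open_nonempty _ hopen hne
  obtain ⟨Δ, hcard, hmax, hiff⟩ := htG
  obtain ⟨P, hΔ⟩ := Finset.card_eq_one.mp hcard
  obtain ⟨i, hi, hti⟩ := htc
  have hPmax : P.IsMaximal := hmax P (by rw [hΔ]; exact Finset.mem_singleton_self P)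
  have hmem : ∀ Q : Ideal R, Q.IsMaximal → ((tt : R) ∈ Q ↔ Q = P) := by
    intro Q hQ
    rw [hiff Q hQ, hΔ, Finset.mem_singleton]
  have htP : (tt : R) ∈ P := (hmem P hPmax).mpr rfl
  have htwI : (tt : R) - w ∈ I := by rw [hti]; simpa using hi
  refine ⟨tt, P, tt.2, htwI, hPmax, ?_, hmem⟩
  intro hIP
  exact cop_iff.mp hc P hPmax hIP (by simpa using P.sub_mem htP (hIP htwI))

/-- Torsion class group: some power of a nonzero ideal is principal. -/
lemma exists_pow_principal [IsDedekindDomain R]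
    (htors : ∀ c : ClassGroup R, IsOfFinOrder c) {P : Ideal R} (hP : P ≠ ⊥) :
    ∃ (m : ℕ) (p : R), 1 ≤ m ∧ p ≠ 0 ∧ P ^ m = Ideal.span {p} := by
  have hmem : P ∈ (Ideal R)⁰ := mem_nonZeroDivisors_iff_ne_zero.mpr
    (by simpa [Submodule.zero_eq_bot] using hP)
  set c := ClassGroup.mk0 (⟨P, hmem⟩ : (Ideal R)⁰) with hc
  have hfin := htors c
  set m := orderOf c with hmdef
  have hm : 0 < m := hfin.orderOf_pos
  have h1 : c ^ m = 1 := pow_orderOf_eq_one c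
  have hPm : P ^ m ∈ (Ideal R)⁰ := pow_mem hmem m
  have heq : (⟨P ^ m, hPm⟩ : (Ideal R)⁰) = (⟨P, hmem⟩ : (Ideal R)⁰) ^ m := by
    ext; simp
  have hone : ClassGroup.mk0 ⟨P ^ m, hPm⟩ = 1 := by
    rw [heq, map_pow]; exact h1
  obtain ⟨p, hp⟩ := (ClassGroup.mk0_eq_one_iff hPm).mp hone
  refine ⟨m, p, hm, ?_, hp⟩
  intro hp0
  subst hp0
  rw [Submodule.span_zero_singleton] at hp
  have h0 : P ^ m = (0 : Ideal R) := by rw [Submodule.zero_eq_bot]; exact hp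
  have hP0 : P = (0 : Ideal R) := (pow_eq_zero_iff hm.ne').mp h0
  rw [Submodule.zero_eq_bot] at hP0
  exact hP hP0

/-- Finds `k` pairwise distinct maximal ideals avoiding a nonzero ideal `A`,
together with principal powers. -/
lemma exists_fresh_family [IsDedekindDomain R]
    (htors : ∀ c : ClassGroup R, IsOfFinOrder c) (hdense : Dense (golombGn R 1))
    (k : ℕ) :
    ∀ A : Ideal R, A ≠ ⊥ → ∃ (N : Fin k → Ideal R) (m : Fin k → ℕ) (p : Fin k → R),
      Function.Injective N ∧ ∀ i, (N i).IsMaximal ∧ ¬A ≤ N i ∧ 1 ≤ m i ∧ p i ≠ 0 ∧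
        N i ^ m i = Ideal.span {p i} := by
  induction k with
  | zero =>
    exact fun A hA => ⟨Fin.elim0, Fin.elim0, Fin.elim0,
      fun a => a.elim0, fun i => i.elim0⟩
  | succ k ih =>
    intro A hA
    obtain ⟨t, P, ht0, htA, hPmax, hAP, htiff⟩ :=
      exists_G1_elt hdense one_ne_zero hA (by simp [Ideal.span_singleton_one])
    have htP : t ∈ P := (htiff P hPmax).mpr rfl
    have hPbot : P ≠ ⊥ := fun h => ht0 (by rwa [h, Ideal.mem_bot] at htP)
    obtain ⟨m₀, p₀, hm₀, hp₀, hpow₀⟩ := exists_pow_principal htors hPbot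
    have hAPbot : A * P ≠ ⊥ := by simp only [ne_eq, Ideal.mul_eq_bot]; tauto
    obtain ⟨N', m', p', hinj', hprops'⟩ := ih (A * P) hAPbot
    refine ⟨Fin.cons P N', Fin.cons m₀ m', Fin.cons p₀ p', ?_, ?_⟩
    · refine Fin.cons_injective_iff.mpr ⟨?_, hinj'⟩
      rintro ⟨i, hi⟩
      exact (hprops' i).2.1 (hi ▸ Ideal.mul_le_right)
    · intro i
      refine Fin.cases ?_ ?_ i
      · simpa using ⟨hPmax, hAP, hm₀, hp₀, hpow₀⟩
      · intro j
        have h := hprops' j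
        have hAj : ¬A ≤ N' j := fun hle => h.2.1 (le_trans Ideal.mul_le_left hle)
        simpa using ⟨h.1, hAj, h.2.2⟩

/-- The exact set of maximal ideals containing a product of generators of
principal prime powers. -/
lemma prod_exact [IsDedekindDomain R] (k : ℕ) (N : Fin k → Ideal R)
    (m : Fin k → ℕ) (p : Fin k → R)
    (hprops : ∀ i, (N i).IsMaximal ∧ 1 ≤ m i ∧ p i ≠ 0 ∧ N i ^ m i = Ideal.span {p i}) :
    (∏ i, p i) ≠ 0 ∧
      ∀ Q : Ideal R, Q.IsMaximal → ((∏ i, p i) ∈ Q ↔ ∃ i, Q = N i) := by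
  constructor
  · exact Finset.prod_ne_zero_iff.mpr fun i _ => (hprops i).2.2.1
  · intro Q hQ
    haveI := hQ.isPrime
    rw [Ideal.IsPrime.prod_mem_iff]
    constructor
    · rintro ⟨i, -, hpi⟩
      have hle : N i ^ m i ≤ Q := by
        rw [(hprops i).2.2.2]; exact (Ideal.span_singleton_le_iff_mem Q).mpr hpi
      have hle' : N i ≤ Q :=
        Ideal.IsPrime.le_of_pow_le hle
      exact ⟨i, ((hprops i).1.eq_of_le hQ.ne_top hle').symm⟩
    · rintro ⟨i, rfl⟩
      refine ⟨i, Finset.mem_univ i, ?_⟩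
      have h1 : p i ∈ N i ^ m i := by
        rw [(hprops i).2.2.2]; exact Ideal.mem_span_singleton_self _
      exact Ideal.pow_le_self (Nat.one_le_iff_ne_zero.mp (hprops i).2.1) h1

/-- Key construction: an element congruent to `c` mod `A` whose set of maximal
ideals is exactly the prescribed family `N` plus one extra "fresh" prime. -/
lemma exists_exact [IsDedekindDomain R]
    (htors : ∀ c : ClassGroup R, IsOfFinOrder c) (hdense : Dense (golombGn R 1))
    (k : ℕ) (A : Ideal R) (hA : A ≠ ⊥) (c : R)
    (hccop : Ideal.span {c} ⊔ A = ⊤)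
    (N : Fin (k + 1) → Ideal R) (m : Fin (k + 1) → ℕ) (p : Fin (k + 1) → R)
    (hNinj : Function.Injective N)
    (hprops : ∀ i, (N i).IsMaximal ∧ ¬A ≤ N i ∧ 1 ≤ m i ∧ p i ≠ 0 ∧
      N i ^ m i = Ideal.span {p i}) :
    ∃ (z : R) (Pt : Ideal R), z ≠ 0 ∧ z - c ∈ A ∧ Pt.IsMaximal ∧ (∀ i, Pt ≠ N i) ∧
      (∀ Q : Ideal R, Q.IsMaximal → (z ∈ Q ↔ (Q = Pt ∨ ∃ i, Q = N i))) := by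
  obtain ⟨hg0, hgmem⟩ := prod_exact (k + 1) N m p
    (fun i => ⟨(hprops i).1, (hprops i).2.2⟩)
  set g := ∏ i, p i with hgdef
  have hNbot : ∀ i, N i ≠ ⊥ := fun i =>
    ne_bot_of_pow_eq_span (hprops i).2.2.1 (hprops i).2.2.2.1 (hprops i).2.2.2.2
  have hgA : Ideal.span {g} ⊔ A = ⊤ := by
    rw [cop_iff]
    intro P hP hAP hgP
    obtain ⟨i, rfl⟩ := (hgmem P hP).mp hgP
    exact (hprops i).2.1 hAP
  set B := ∏ i, N i with hBdef
  have hBle : ∀ i, B ≤ N i := fun i =>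
    Ideal.le_of_dvd (Finset.dvd_prod_of_mem N (Finset.mem_univ i))
  have hAB : A ⊔ B = ⊤ := by
    by_contra h
    obtain ⟨P, hP, hle⟩ := Ideal.exists_le_maximal _ h
    haveI := hP.isPrime
    obtain ⟨i, -, hi⟩ := (Ideal.IsPrime.prod_le hP.isPrime).mp
      (le_trans le_sup_right hle)
    have heq : N i = P := (hprops i).1.eq_of_le hP.ne_top hi
    exact (hprops i).2.1 (heq ▸ le_trans le_sup_left hle)
  obtain ⟨r, hr, e, he, hre⟩ := Submodule.mem_sup.mp
    (show (1 : R) ∈ Ideal.span {g} ⊔ A from hgA ▸ Submodule.mem_top)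
  obtain ⟨f, hf⟩ := Ideal.mem_span_singleton'.mp hr
  obtain ⟨v, hvA, hvB⟩ := crt2 hAB (f * c) 1
  have hB0 : B ≠ ⊥ := by
    rw [hBdef, ← Submodule.zero_eq_bot]
    exact Finset.prod_ne_zero_iff.mpr fun i _ => by
      rw [Submodule.zero_eq_bot]; exact hNbot i
  have hfg1 : f * g + e = 1 := by rw [hf]; exact hre
  have hvcop : Ideal.span {v} ⊔ A * B = ⊤ := by
    rw [cop_iff]
    intro P hP hABP hvP
    haveI := hP.isPrime
    rcases hP.isPrime.mul_le.mp hABP with hle | hle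
    · have hfc : f * c ∈ P := by simpa using P.sub_mem hvP (hle hvA)
      rcases hP.isPrime.mul_mem_iff_mem_or_mem.mp hfc with hfP | hcP
      · have : (1 : R) ∈ P := by
          have := P.add_mem (P.mul_mem_right g hfP) (hle he)
          rwa [hfg1] at this
        exact hP.ne_top ((Ideal.eq_top_iff_one _).mpr this)
      · exact cop_iff.mp hccop P hP hle hcP
    · have h1P : (1 : R) ∈ P := by simpa using P.sub_mem hvP (hle hvB)
      exact hP.ne_top ((Ideal.eq_top_iff_one _).mpr h1P)
  have hv0 : v ≠ 0 := by
    intro h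
    have h1 : v - 1 ∈ N 0 := hBle 0 hvB
    rw [h, zero_sub] at h1
    exact (hprops 0).1.ne_top ((Ideal.eq_top_iff_one _).mpr (by simpa using (N 0).neg_mem h1))
  have hABbot : A * B ≠ ⊥ := by simp only [ne_eq, Ideal.mul_eq_bot]; tauto
  obtain ⟨t, Pt, ht0, htv, hPtmax, hPtAB, htiff⟩ := exists_G1_elt hdense hv0 hABbot hvcop
  refine ⟨g * t, Pt, mul_ne_zero hg0 ht0, ?_, hPtmax, ?_, ?_⟩
  · have h1 : g * (t - v) ∈ A := A.mul_mem_left _ (Ideal.mul_le_left htv)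
    have h2 : g * (v - f * c) ∈ A := A.mul_mem_left _ hvA
    have h3 : e * c ∈ A := A.mul_mem_right _ he
    have key : g * t - c = g * (t - v) + g * (v - f * c) - e * c := by
      linear_combination c * hfg1
    rw [key]
    exact A.sub_mem (A.add_mem h1 h2) h3
  · intro i h
    have htPt : t ∈ Pt := (htiff Pt hPtmax).mpr rfl
    have h1 : t - v ∈ N i := (le_trans Ideal.mul_le_right (hBle i)) htv
    have h2 : v - 1 ∈ N i := hBle i hvB
    have h3 : t - 1 ∈ N i := by simpa using (N i).add_mem h1 h2
    have h4 : (1 : R) ∈ N i := by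
      have h5 := (N i).sub_mem (h ▸ htPt) h3
      rwa [sub_sub_cancel] at h5
    exact (hprops i).1.ne_top ((Ideal.eq_top_iff_one _).mpr h4)
  · intro Q hQ
    haveI := hQ.isPrime
    rw [hQ.isPrime.mul_mem_iff_mem_or_mem]
    constructor
    · rintro (hg | ht)
      · exact Or.inr ((hgmem Q hQ).mp hg)
      · exact Or.inl ((htiff Q hQ).mp ht)
    · rintro (rfl | ⟨i, rfl⟩)
      · exact Or.inr ((htiff Q hQ).mpr rfl)
      · exact Or.inl ((hgmem (N i) hQ).mpr ⟨i, rfl⟩)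

lemma mem_golombGn' (k : ℕ) (z : R) (hz : z ≠ 0) (N : Fin k → Ideal R)
    (hinj : Function.Injective N) (hmax : ∀ i, (N i).IsMaximal)
    (hform : ∀ Q : Ideal R, Q.IsMaximal → (z ∈ Q ↔ ∃ i, Q = N i)) :
    (⟨z, hz⟩ : GolombSpace R) ∈ golombGn R k := by
  classical
  refine ⟨Finset.univ.image N, ?_, ?_, ?_⟩
  · rw [Finset.card_image_of_injective _ hinj, Finset.card_univ, Fintype.card_fin]
  · intro P hP
    obtain ⟨i, -, rfl⟩ := Finset.mem_image.mp hP
    exact hmax i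
  · intro P hP
    rw [hform P hP]
    constructor
    · rintro ⟨i, rfl⟩
      exact Finset.mem_image.mpr ⟨i, Finset.mem_univ i, rfl⟩
    · intro h
      obtain ⟨i, -, rfl⟩ := Finset.mem_image.mp h
      exact ⟨i, rfl⟩

lemma mem_golombGn_cons (k : ℕ) (z : R) (hz : z ≠ 0) (N : Fin (k + 1) → Ideal R)
    (Pt : Ideal R) (hinj : Function.Injective N) (hmax : ∀ i, (N i).IsMaximal)
    (hPt : Pt.IsMaximal) (hne : ∀ i, Pt ≠ N i)
    (hform : ∀ Q : Ideal R, Q.IsMaximal → (z ∈ Q ↔ (Q = Pt ∨ ∃ i, Q = N i))) :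
    (⟨z, hz⟩ : GolombSpace R) ∈ golombGn R (k + 2) := by
  apply mem_golombGn' (k + 2) z hz (Fin.cons Pt N)
  · refine Fin.cons_injective_iff.mpr ⟨?_, hinj⟩
    rintro ⟨i, hi⟩
    exact hne i hi.symm
  · intro i
    refine Fin.cases hPt hmax i
  · intro Q hQ
    rw [hform Q hQ]
    constructor
    · rintro (rfl | ⟨i, rfl⟩)
      · exact ⟨0, by simp⟩
      · exact ⟨i.succ, by simp⟩
    · rintro ⟨j, rfl⟩
      refine Fin.cases ?_ ?_ j
      · exact Or.inl (by simp)
      · intro i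
        exact Or.inr ⟨i, by simp⟩

end GolombAux

/-- If `R` is a Dedekind domain with torsion class group such that `G₁(R)` is
dense in the Golomb space `G(R)`, then for every `n ≥ 2` the subspace `G_n(R)` of `G(R)`
is not a regular topological space. -/
theorem golombGn_not_regularSpace (R : Type*) [CommRing R] [IsDomain R] [IsDedekindDomain R]
    (htors : ∀ c : ClassGroup R, IsOfFinOrder c)
    (hdense : Dense (golombGn R 1)) (n : ℕ) (hn : 2 ≤ n) :
    ¬ RegularSpace (golombGn R n) := by
  intro hreg
  obtain ⟨k, rfl⟩ : ∃ k, n = k + 2 := ⟨n - 2, by omega⟩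
  have htopbot : (⊤ : Ideal R) ≠ ⊥ := by
    intro h
    have h1 : (1 : R) ∈ (⊥ : Ideal R) := h ▸ Submodule.mem_top
    exact one_ne_zero (Ideal.mem_bot.mp h1)
  -- the distinguished maximal ideal P₀
  obtain ⟨Pf, mf, pf, -, hPf⟩ := exists_fresh_family htors hdense 1 ⊤ htopbot
  set P₀ := Pf 0 with hP₀def
  obtain ⟨hP₀max, -, hm₀, hp₀0, hP₀pow⟩ := hPf 0
  set m₀ := mf 0
  set p₀ := pf 0
  have hP₀bot : P₀ ≠ ⊥ := ne_bot_of_pow_eq_span hm₀ hp₀0 hP₀pow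
  -- the point x : a product of generators of principal powers of k+2 fresh maximal ideals
  obtain ⟨M, mM, pM, hMinj, hMprops⟩ := exists_fresh_family htors hdense (k + 2) P₀ hP₀bot
  obtain ⟨hx0, hxmem⟩ := prod_exact (k + 2) M mM pM
    (fun i => ⟨(hMprops i).1, (hMprops i).2.2⟩)
  set x := ∏ i, pM i with hxdef
  have hxP₀ : x ∉ P₀ := by
    intro h
    obtain ⟨i, hQ⟩ := (hxmem P₀ hP₀max).mp h
    exact (hMprops i).2.1 (hQ ▸ le_rfl)
  have hxGn : (⟨x, hx0⟩ : GolombSpace R) ∈ golombGn R (k + 2) :=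
    mem_golombGn' (k + 2) x hx0 M hMinj (fun i => (hMprops i).1) hxmem
  set xp : ↥(golombGn R (k + 2)) := ⟨⟨x, hx0⟩, hxGn⟩ with hxpdef
  -- The closed set: multiples of P₀ inside G_n
  set CG : Set (GolombSpace R) := {w : GolombSpace R | (w : R) ∈ P₀} with hCGdef
  have hCGclosed : IsClosed CG := by
    rw [← isOpen_compl_iff]
    apply gBasis_isBasis.isOpen_iff.mpr
    intro a ha
    refine ⟨gcoset (a : R) P₀, ⟨(a : R), P₀, a.2, hP₀bot, cop_of_notMem hP₀max ha, rfl⟩,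
      ⟨0, zero_mem _, (add_zero _).symm⟩, ?_⟩
    rintro y ⟨i, hi, hyi⟩ hyP
    apply ha
    have : (y : R) - i ∈ P₀ := P₀.sub_mem hyP hi
    rwa [hyi, add_sub_cancel_right] at this
  have hCclosed : IsClosed (Subtype.val ⁻¹' CG : Set ↥(golombGn R (k + 2))) :=
    hCGclosed.preimage continuous_subtype_val
  have hxnot : xp ∉ (Subtype.val ⁻¹' CG : Set ↥(golombGn R (k + 2))) := hxP₀
  have hdisj := hreg.regular hCclosed hxnot
  obtain ⟨SA, hSA, SB, hSB, hABdisj⟩ := Filter.disjoint_iff.mp hdisj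
  obtain ⟨O, hOopen, hCO, hOSA⟩ := mem_nhdsSet_iff_exists.mp hSA
  -- basic neighborhood of x in the Golomb space
  obtain ⟨B', hB'nh, hB'sub⟩ := Filter.mem_comap.mp
    (by rw [← nhds_subtype (golombGn R (k + 2)) xp]; exact hSB)
  obtain ⟨J, hJbot, hJcop, hJsub⟩ := exists_coset_subset hB'nh
  -- factor out the P₀ part of J
  have hP₀prime : Prime P₀ := Ideal.prime_of_isPrime hP₀bot hP₀max.isPrime
  obtain ⟨s, J₀, hndvd, hJfac⟩ := WfDvdMonoid.max_power_factor
    (show J ≠ 0 by simpa [Submodule.zero_eq_bot] using hJbot) hP₀prime.irreducible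
  have hJ₀P₀ : ¬J₀ ≤ P₀ := fun h => hndvd (Ideal.dvd_iff_le.mpr h)
  have hJ₀bot : J₀ ≠ ⊥ := by
    intro h
    rw [hJfac, h, Ideal.mul_bot] at hJbot
    exact hJbot rfl
  have hJJ₀ : J ≤ J₀ := by rw [hJfac]; exact Ideal.mul_le_right
  have hxJ₀ : Ideal.span {x} ⊔ J₀ = ⊤ :=
    cop_iff.mpr fun P hP h => cop_iff.mp hJcop P hP (le_trans hJJ₀ h)
  -- the fresh family Q avoiding J * P₀
  have hJP₀bot : J * P₀ ≠ ⊥ := by simp only [ne_eq, Ideal.mul_eq_bot]; tauto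
  obtain ⟨Qf, mQ, pQ, hQinj, hQprops⟩ := exists_fresh_family htors hdense k (J * P₀) hJP₀bot
  -- assemble the family N = P₀ :: Q for the construction of y
  set N : Fin (k + 1) → Ideal R := Fin.cons P₀ Qf with hNdef
  have hNinj : Function.Injective N := by
    refine Fin.cons_injective_iff.mpr ⟨?_, hQinj⟩
    rintro ⟨i, hi⟩
    exact (hQprops i).2.1 (hi ▸ Ideal.mul_le_right)
  set mN : Fin (k + 1) → ℕ := Fin.cons m₀ mQ with hmNdef
  set pN : Fin (k + 1) → R := Fin.cons p₀ pQ with hpNdef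
  have hNprops : ∀ i, (N i).IsMaximal ∧ ¬J₀ ≤ N i ∧ 1 ≤ mN i ∧
      pN i ≠ 0 ∧ (N i) ^ (mN i) = Ideal.span {pN i} := by
    intro i
    refine Fin.cases ?_ ?_ i
    · simpa [hNdef, hmNdef, hpNdef] using ⟨hP₀max, hJ₀P₀, hm₀, hp₀0, hP₀pow⟩
    · intro j
      have h := hQprops j
      have hJ₀j : ¬J₀ ≤ Qf j := by
        intro hle
        exact h.2.1 (le_trans Ideal.mul_le_left (le_trans hJJ₀ hle))
      simpa [hNdef, hmNdef, hpNdef] using ⟨h.1, hJ₀j, h.2.2⟩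
  -- construct y
  obtain ⟨y, Pt, hy0, hyx, hPtmax, hPtne, hyiff⟩ :=
    exists_exact htors hdense k J₀ hJ₀bot x hxJ₀ N mN pN
      hNinj hNprops
  have hyP₀ : y ∈ P₀ := by
    refine (hyiff P₀ hP₀max).mpr (Or.inr ⟨0, ?_⟩)
    rw [hNdef, Fin.cons_zero]
  have hyGn : (⟨y, hy0⟩ : GolombSpace R) ∈ golombGn R (k + 2) :=
    mem_golombGn_cons k y hy0 N Pt hNinj (fun i => (hNprops i).1) hPtmax hPtne hyiff
  set yp : ↥(golombGn R (k + 2)) := ⟨⟨y, hy0⟩, hyGn⟩ with hypdef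
  have hyO : yp ∈ O := hCO hyP₀
  obtain ⟨O', hO'open, hO'pre⟩ := isOpen_induced_iff.mp hOopen
  have hyO' : (⟨y, hy0⟩ : GolombSpace R) ∈ O' := by
    rw [← hO'pre] at hyO; exact hyO
  obtain ⟨I, hIbot, hIcop, hIsub⟩ := exists_coset_subset (hO'open.mem_nhds hyO')
  -- J₀ ≤ I ⊔ J
  have hIP₀ : I ⊔ P₀ = ⊤ := by
    by_contra h
    have heq : P₀ = I ⊔ P₀ := hP₀max.eq_of_le h le_sup_right
    have hIle : I ≤ P₀ := heq ▸ le_sup_left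
    exact cop_iff.mp hIcop P₀ hP₀max hIle hyP₀
  have hIP₀s : I ⊔ P₀ ^ s = ⊤ := by
    rcases Nat.eq_zero_or_pos s with hs | hs
    · simp [hs]
    · have h1 : IsCoprime I P₀ := Ideal.isCoprime_iff_sup_eq.mpr hIP₀
      exact Ideal.isCoprime_iff_sup_eq.mp (h1.pow_right)
  have hJ₀le : J₀ ≤ I ⊔ J := by
    have h1 : J₀ = J₀ * I ⊔ J₀ * P₀ ^ s := by
      rw [← Ideal.mul_sup, hIP₀s, Ideal.mul_top]
    rw [h1]
    refine sup_le_sup Ideal.mul_le_right (le_of_eq ?_)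
    rw [hJfac, mul_comm]
  obtain ⟨iI, hiI, jJ, hjJ, hij⟩ := Submodule.mem_sup.mp (hJ₀le hyx)
  -- pick z₀ in (y + I) ∩ (x + J), coprime to I * J
  obtain ⟨z₀, hz₀0, hz₀y, hz₀x, hz₀cop⟩ :
      ∃ z₀ : R, z₀ ≠ 0 ∧ z₀ - y ∈ I ∧ z₀ - x ∈ J ∧ Ideal.span {z₀} ⊔ I * J = ⊤ := by
    by_cases hc : y - iI = 0
    · -- then y ∈ I, so I = ⊤; use x
      have hyI : y ∈ I := by
        have : iI ∈ I := hiI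
        rwa [sub_eq_zero.mp hc]
      have hItop : I = ⊤ := by
        have hle : Ideal.span {y} ≤ I := (Ideal.span_singleton_le_iff_mem I).mpr hyI
        rw [← hIcop]; exact (sup_eq_right.mpr hle).symm
      refine ⟨x, hx0, by simp [hItop], by simp, ?_⟩
      rw [hItop, Ideal.top_mul]; exact hJcop
    · refine ⟨y - iI, hc, by simpa using I.neg_mem hiI, ?_, ?_⟩
      · have : y - iI - x = jJ := by
          have := hij; linear_combination -this
        rw [this]; exact hjJ
      · rw [cop_iff]
        intro P hP hle hzP
        haveI := hP.isPrime
        rcases hP.isPrime.mul_le.mp hle with h | h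
        · have hyP : y ∈ P := by simpa using P.add_mem hzP (h hiI)
          exact cop_iff.mp hIcop P hP h hyP
        · have hxP : x ∈ P := by
            have h1 : y - iI - x ∈ P := by
              have heq : y - iI - x = jJ := by linear_combination -hij
              rw [heq]; exact h hjJ
            simpa using P.sub_mem hzP h1
          exact cop_iff.mp hJcop P hP h hxP
  -- final element z in (y + I) ∩ (x + J) ∩ G_n
  have hIJbot : I * J ≠ ⊥ := by simp only [ne_eq, Ideal.mul_eq_bot]; tauto
  obtain ⟨N2, mN2, pN2, hN2inj, hN2props⟩ :=
    exists_fresh_family htors hdense (k + 1) (I * J) hIJbot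
  obtain ⟨z, Pt2, hz0, hzz₀, hPt2max, hPt2ne, hziff⟩ :=
    exists_exact htors hdense k (I * J) hIJbot z₀ hz₀cop N2 mN2 pN2 hN2inj hN2props
  have hzGn : (⟨z, hz0⟩ : GolombSpace R) ∈ golombGn R (k + 2) :=
    mem_golombGn_cons k z hz0 N2 Pt2 hN2inj (fun i => (hN2props i).1) hPt2max hPt2ne hziff
  set zp : ↥(golombGn R (k + 2)) := ⟨⟨z, hz0⟩, hzGn⟩ with hzpdef
  have hzy : z - y ∈ I := by
    have h1 : z - z₀ ∈ I := Ideal.mul_le_left hzz₀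
    have h2 : z - y = (z - z₀) + (z₀ - y) := by ring
    rw [h2]; exact I.add_mem h1 hz₀y
  have hzx : z - x ∈ J := by
    have h1 : z - z₀ ∈ J := Ideal.mul_le_right hzz₀
    have h2 : z - x = (z - z₀) + (z₀ - x) := by ring
    rw [h2]; exact J.add_mem h1 hz₀x
  have hzO' : (⟨z, hz0⟩ : GolombSpace R) ∈ O' :=
    hIsub ⟨z - y, hzy, by ring⟩
  have hzSA : zp ∈ SA := hOSA (by rw [← hO'pre]; exact hzO')
  have hzSB : zp ∈ SB := hB'sub (hJsub ⟨z - x, hzx, by ring⟩)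
  exact Set.disjoint_left.mp hABdisj hzSA hzSB

end
end

section
/- Let K be a field. Then K has characteristic 0 if and only if there exists an irreducible polynomial g ∈ K[X] such that for every maximal ideal P of K[X] not containing g, the set ⟨g⟩ is closed in the P-topology on K[X] ∖ P. -/
open Polynomial Filter

noncomputable section

/-- In the `P`-topology, every open set containing `x` contains a coset `x + P^m`. -/
theorem exists_coset_subset_s4 {R : Type*} [CommRing R] (P : Ideal R)
    {O : Set {x : R // x ∉ P}} (hO : IsOpen O) :
    ∀ x ∈ O, ∃ m : ℕ, 1 ≤ m ∧
      ∀ z : {x : R // x ∉ P}, (z : R) - (x : R) ∈ P ^ m → z ∈ O := by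
  have hO' : TopologicalSpace.GenerateOpen
      {S : Set {x : R // x ∉ P} | ∃ (a : R) (n : ℕ), a ∉ P ∧ 1 ≤ n ∧
        S = {y : {x : R // x ∉ P} | ∃ b ∈ P ^ n, (y : R) = a + b}} O := hO
  clear hO
  induction hO' with
  | basic S hS =>
      rintro x hx
      obtain ⟨a, n, _ha, hn, rfl⟩ := hS
      obtain ⟨b0, hb0, hxb⟩ := hx
      refine ⟨n, hn, fun z hz => ⟨b0 + ((z : R) - (x : R)), (P ^ n).add_mem hb0 hz, ?_⟩⟩
      rw [← add_assoc, ← hxb]; ring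
  | univ => exact fun x _ => ⟨1, le_rfl, fun z _ => trivial⟩
  | inter O1 O2 h1 h2 ih1 ih2 =>
      rintro x ⟨hx1, hx2⟩
      obtain ⟨m1, hm1, hs1⟩ := ih1 x hx1
      obtain ⟨m2, hm2, hs2⟩ := ih2 x hx2
      refine ⟨max m1 m2, le_trans hm1 (le_max_left _ _), fun z hz => ⟨?_, ?_⟩⟩
      · exact hs1 z (Ideal.pow_le_pow_right (le_max_left m1 m2) hz)
      · exact hs2 z (Ideal.pow_le_pow_right (le_max_right m1 m2) hz)
  | sUnion T hT ih =>
      rintro x ⟨t, ht, hxt⟩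
      obtain ⟨m, hm, hs⟩ := ih t ht x hxt
      exact ⟨m, hm, fun z hz => ⟨t, ht, hs z hz⟩⟩

/-- In characteristic zero, no unit multiple of `X^a` is congruent to a unit multiple of a
different power `X^b` modulo the square of a prime not dividing `X`. -/
theorem no_two_pows {K : Type*} [Field K] [CharZero K] {h u v : K[X]}
    (hh : Prime h) (hXh : ¬ h ∣ X) (hu : IsUnit u) (hv : IsUnit v)
    {a b : ℕ} (hab : a < b) (hdvd : h ^ 2 ∣ u * X ^ a - v * X ^ b) : False := by
  obtain ⟨cu, hcu, rfl⟩ := Polynomial.isUnit_iff.mp hu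
  obtain ⟨cv, hcv, rfl⟩ := Polynomial.isUnit_iff.mp hv
  set Δ := b - a with hΔdef
  have hΔ1 : 1 ≤ Δ := Nat.sub_pos_of_lt hab
  have key : C cu * X ^ a - C cv * X ^ b = X ^ a * (C cu - C cv * X ^ Δ) := by
    have hba : a + Δ = b := Nat.add_sub_cancel' hab.le
    rw [← hba, pow_add]; ring
  rw [key] at hdvd
  have hXa : ¬ h ∣ X ^ a := fun hX => hXh (hh.dvd_of_dvd_pow hX)
  have hf : h ^ 2 ∣ C cu - C cv * X ^ Δ := hh.pow_dvd_of_dvd_mul_left 2 hXa hdvd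
  have hfne : C cu - C cv * X ^ Δ ≠ 0 := by
    intro h0
    have heq : C cu = C cv * X ^ Δ := by linear_combination h0
    have hXdvd : (X : K[X]) ∣ C cu := by
      rw [heq]
      exact Dvd.dvd.mul_left (dvd_pow_self X (Nat.one_le_iff_ne_zero.mp hΔ1)) _
    exact Polynomial.not_isUnit_X (isUnit_of_dvd_unit hXdvd (hcu.map C))
  have hder : h ∣ derivative (C cu - C cv * X ^ Δ) := by
    obtain ⟨k, hk⟩ := hf
    rw [hk, derivative_mul, derivative_pow]
    exact Dvd.dvd.add
      (Dvd.dvd.mul_right (Dvd.dvd.mul_right (Dvd.dvd.mul_left (dvd_pow_self h one_ne_zero) _) _) _)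
      (Dvd.dvd.mul_right (dvd_pow_self h two_ne_zero) _)
  rw [derivative_sub, derivative_C, derivative_C_mul, derivative_X_pow, zero_sub, dvd_neg] at hder
  have hCΔ : IsUnit (C (Δ : K) : K[X]) := by
    rw [Polynomial.isUnit_C, isUnit_iff_ne_zero, Nat.cast_ne_zero]
    omega
  rcases hh.2.2 _ _ hder with hc | hx
  · exact hh.not_unit (isUnit_of_dvd_unit hc (hcv.map C))
  rcases hh.2.2 _ _ hx with hc | hx2
  · exact hh.not_unit (isUnit_of_dvd_unit hc hCΔ)
  · exact hXh (hh.dvd_of_dvd_pow hx2)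

/-- A field `K` has characteristic `0` if and only if there is an irreducible
polynomial `g ∈ K[X]` such that for every maximal ideal `P` of `K[X]` not containing `g`,
the set `⟨g⟩ = {u·gⁿ : u unit, n ≥ 1}` is closed in the `P`-topology on `K[X] ∖ P`. -/
theorem charZero_iff_pow_closed (K : Type*) [Field K] :
    CharZero K ↔ ∃ g : K[X], Irreducible g ∧
      ∀ P : Ideal K[X], P.IsMaximal → g ∉ P →
        IsClosed {x : {y : K[X] // y ∉ P} |
          ∃ (u : K[X]) (n : ℕ), IsUnit u ∧ 1 ≤ n ∧ (x : K[X]) = u * g ^ n} := by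
  constructor
  · intro hK
    refine ⟨X, Polynomial.irreducible_X, fun P hP hXP => ?_⟩
    obtain ⟨h, hPh⟩ := (IsPrincipalIdealRing.principal P).principal
    rw [Ideal.submodule_span_eq] at hPh
    have hh0 : h ≠ 0 := by
      rintro rfl
      rw [show Ideal.span ({(0 : K[X])} : Set K[X]) = ⊥ by simp] at hPh
      rw [hPh] at hP
      have h1 : (⊥ : Ideal K[X]) = Ideal.span {X} := hP.eq_of_le
        (by rw [Ne, Ideal.span_singleton_eq_top]; exact Polynomial.not_isUnit_X) bot_le
      exact Polynomial.X_ne_zero (Ideal.span_singleton_eq_bot.mp h1.symm)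
    have hpr : Prime h := (Ideal.span_singleton_prime hh0).mp (hPh ▸ hP.isPrime)
    have hhX : ¬ h ∣ X := fun hd => hXP (hPh ▸ Ideal.mem_span_singleton.mpr hd)
    rw [← isOpen_compl_iff, isOpen_iff_forall_mem_open]
    rintro ⟨y, hyP⟩ hy
    have main : ∃ m : ℕ, 1 ≤ m ∧
        ∀ u n, IsUnit u → 1 ≤ n → ¬ (h ^ m ∣ u * X ^ n - y) := by
      by_contra hcon
      push_neg at hcon
      obtain ⟨u₀, n₀, hu₀, hn₀, hd₀⟩ := hcon 2 one_le_two
      have hall : ∀ m : ℕ, h ^ m ∣ u₀ * X ^ n₀ - y := by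
        intro m
        obtain ⟨u, n, hu, hn, hd⟩ := hcon (max m 2) (le_trans one_le_two (le_max_right m 2))
        have hd2 : h ^ 2 ∣ u * X ^ n - y := (pow_dvd_pow h (le_max_right m 2)).trans hd
        have hdiff : h ^ 2 ∣ u * X ^ n - u₀ * X ^ n₀ := by
          have h1 : (u * X ^ n - y) - (u₀ * X ^ n₀ - y) = u * X ^ n - u₀ * X ^ n₀ := by ring
          exact h1 ▸ dvd_sub hd2 hd₀
        have hnn : n = n₀ := by
          rcases lt_trichotomy n n₀ with hlt | heq | hgt
          · exact (no_two_pows hpr hhX hu hu₀ hlt hdiff).elim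
          · exact heq
          · exact (no_two_pows hpr hhX hu₀ hu hgt
              (by simpa [neg_sub] using hdiff.neg_right)).elim
        rw [hnn] at hdiff
        have huu : u = u₀ := by
          have hdd : h ^ 2 ∣ (u - u₀) * X ^ n₀ := by
            have h2 : u * X ^ n₀ - u₀ * X ^ n₀ = (u - u₀) * X ^ n₀ := by ring
            exact h2 ▸ hdiff
          have h2 : h ^ 2 ∣ u - u₀ :=
            hpr.pow_dvd_of_dvd_mul_right 2 (fun hX => hhX (hpr.dvd_of_dvd_pow hX)) hdd
          by_contra hne
          have hun : IsUnit (u - u₀) := by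
            obtain ⟨cu, hcu, rfl⟩ := Polynomial.isUnit_iff.mp hu
            obtain ⟨cu₀, hcu₀, rfl⟩ := Polynomial.isUnit_iff.mp hu₀
            rw [← Polynomial.C_sub, Polynomial.isUnit_C, isUnit_iff_ne_zero, sub_ne_zero]
            exact fun hcc => hne (by rw [hcc])
          exact hpr.not_unit
            (isUnit_of_dvd_unit ((dvd_pow_self h two_ne_zero).trans h2) hun)
        rw [← hnn, ← huu]
        exact (pow_dvd_pow h (le_max_left m 2)).trans hd
      have hzero : u₀ * X ^ n₀ - y = 0 := by
        by_contra hne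
        have hle := Polynomial.natDegree_le_of_dvd
          (hall ((u₀ * X ^ n₀ - y).natDegree + 1)) hne
        rw [Polynomial.natDegree_pow] at hle
        have hh1 : 1 ≤ h.natDegree := by
          rcases Nat.eq_zero_or_pos h.natDegree with hd0 | h1
          · exfalso
            have hC := Polynomial.eq_C_of_natDegree_eq_zero hd0
            apply hpr.not_unit
            rw [hC]
            exact Polynomial.isUnit_C.mpr (isUnit_iff_ne_zero.mpr
              (fun hc => hh0 (by rw [hC, hc, map_zero])))
          · exact h1
        have h3 : (u₀ * X ^ n₀ - y).natDegree + 1 ≤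
            ((u₀ * X ^ n₀ - y).natDegree + 1) * h.natDegree := Nat.le_mul_of_pos_right _ hh1
        omega
      exact hy ⟨u₀, n₀, hu₀, hn₀, (sub_eq_zero.mp hzero).symm⟩
    obtain ⟨m, hm1, hQ⟩ := main
    refine ⟨{z : {x : K[X] // x ∉ P} | ∃ b ∈ P ^ m, (z : K[X]) = y + b}, ?_, ?_, ?_⟩
    · rintro z ⟨b, hb, hzb⟩
      rw [hPh, Ideal.span_singleton_pow, Ideal.mem_span_singleton] at hb
      rintro ⟨u, n, hu, hn, hz⟩
      refine hQ u n hu hn ?_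
      have : u * X ^ n - y = b := by rw [← hz, hzb]; ring
      exact this ▸ hb
    · exact TopologicalSpace.isOpen_generateFrom_of_mem ⟨y, m, hyP, hm1, rfl⟩
    · exact ⟨0, (P ^ m).zero_mem, by simp⟩
  · rintro ⟨g, hgirr, hgcl⟩
    by_contra hK0
    set p := ringChar K with hpdef
    have hp0 : p ≠ 0 := by
      intro h0
      haveI : CharP K 0 := h0 ▸ ringChar.charP K
      exact hK0 (CharP.charP_to_charZero K)
    have hpp : p.Prime := (CharP.char_is_prime_or_zero K p).resolve_right hp0
    haveI : Fact p.Prime := ⟨hpp⟩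
    haveI hCP : CharP K[X] p := charP_of_injective_ringHom Polynomial.C_injective p
    have hga : ∃ a : K, g.eval a ≠ 0 := by
      by_cases h0 : g.eval 0 ≠ 0
      · exact ⟨0, h0⟩
      · push_neg at h0
        refine ⟨1, ?_⟩
        have hXg : (X : K[X]) ∣ g := by
          simpa using (Polynomial.dvd_iff_isRoot (a := (0 : K))).mpr h0
        obtain ⟨v, hv⟩ := hXg
        rcases hgirr.isUnit_or_isUnit hv with hX | hvu
        · exact absurd hX Polynomial.not_isUnit_X
        · intro h1
          rw [hv, Polynomial.eval_mul, Polynomial.eval_X, one_mul] at h1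
          have := hvu.map (Polynomial.evalRingHom (1 : K))
          rw [Polynomial.coe_evalRingHom] at this
          exact this.ne_zero h1
    obtain ⟨a, ha⟩ := hga
    set P : Ideal K[X] := Ideal.span {X - C a} with hPdef
    have hPmax : P.IsMaximal :=
      PrincipalIdealRing.isMaximal_of_irreducible (Polynomial.irreducible_X_sub_C a)
    have hgP : g ∉ P := by
      rw [hPdef, Ideal.mem_span_singleton]
      exact fun hd => ha (Polynomial.dvd_iff_isRoot.mp hd)
    have hclosed := hgcl P hPmax hgP
    set e := g.eval a with hedef
    have he0 : e ≠ 0 := ha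
    have hce : (C e : K[X]) ∉ P := by
      rw [hPdef, Ideal.mem_span_singleton]
      intro hd
      have h2 := Polynomial.dvd_iff_isRoot.mp hd
      rw [Polynomial.IsRoot, Polynomial.eval_C] at h2
      exact he0 h2
    have hnotS : (⟨C e, hce⟩ : {x : K[X] // x ∉ P}) ∈
        {x : {y : K[X] // y ∉ P} |
          ∃ u n, IsUnit u ∧ 1 ≤ n ∧ (x : K[X]) = u * g ^ n}ᶜ := by
      rintro ⟨u, n, hu, hn, hCe⟩
      have hgd : 1 ≤ g.natDegree := hgirr.natDegree_pos
      have hu0 : u ≠ 0 := hu.ne_zero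
      have hgn0 : g ^ n ≠ 0 := pow_ne_zero _ hgirr.ne_zero
      have hCe' : (C e : K[X]) = u * g ^ n := hCe
      have hdeg : (C e).natDegree = u.natDegree + n * g.natDegree := by
        rw [hCe', Polynomial.natDegree_mul hu0 hgn0, Polynomial.natDegree_pow]
      rw [Polynomial.natDegree_C] at hdeg
      have hpos : 0 < n * g.natDegree := Nat.mul_pos hn hgd
      omega
    obtain ⟨m, hm1, hsub⟩ := exists_coset_subset_s4 P hclosed.isOpen_compl _ hnotS
    set N := p ^ m with hN
    have hmN : m ≤ N := (Nat.lt_pow_self hpp.one_lt : m < p ^ m).le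
    have hN1 : 1 ≤ N := le_trans hm1 hmN
    obtain ⟨t, ht⟩ : (X - C a) ∣ (g - C e) := by
      rw [Polynomial.dvd_iff_isRoot]
      simp [Polynomial.IsRoot, hedef]
    have hgdecomp : g = C e + (X - C a) * t := by linear_combination ht
    set u : K[X] := C (e * (e ^ N)⁻¹) with hu
    have hcu : e * (e ^ N)⁻¹ ≠ 0 := mul_ne_zero he0 (inv_ne_zero (pow_ne_zero _ he0))
    have huu : IsUnit u := Polynomial.isUnit_C.mpr (isUnit_iff_ne_zero.mpr hcu)
    have hzcalc : u * g ^ N = C e + u * ((X - C a) * t) ^ N := by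
      conv_lhs => rw [hgdecomp]
      rw [hN, add_pow_char_pow, ← hN, mul_add]
      congr 1
      rw [hu, ← Polynomial.C_pow, ← Polynomial.C_mul]
      rw [mul_assoc, inv_mul_cancel₀ (pow_ne_zero _ he0), mul_one]
    have hzP : u * g ^ N ∉ P := by
      intro hmem
      rcases hPmax.isPrime.mem_or_mem hmem with h1 | h2
      · exact hPmax.ne_top (P.eq_top_of_isUnit_mem h1 huu)
      · exact hgP (hPmax.isPrime.mem_of_pow_mem _ h2)
    have hmemcoset : ((⟨u * g ^ N, hzP⟩ : {x : K[X] // x ∉ P}) : K[X]) - (C e) ∈ P ^ m := by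
      have hcalc2 : u * g ^ N - C e = u * ((X - C a) ^ N * t ^ N) := by
        rw [hzcalc, mul_pow]; ring
      show u * g ^ N - C e ∈ P ^ m
      rw [hcalc2]
      refine Ideal.pow_le_pow_right hmN ?_
      rw [hPdef, Ideal.span_singleton_pow, Ideal.mem_span_singleton]
      exact Dvd.dvd.mul_left (dvd_mul_right _ _) _
    exact hsub _ hmemcoset ⟨u, N, huu, hN1, rfl⟩

end
end

section
/- Let K be an algebraically closed field of characteristic 0. Then for every n ≥ 0 the set G_n(K[X]) is a discrete subspace of the Golomb space G(K[X]) and is closed in G(K[X]). -/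
open Polynomial Filter

noncomputable section

namespace GolombAux

variable {K : Type*} [Field K] [DecidableEq K]

/-- radical-type polynomial -/
def Bpoly (p : K[X]) : K[X] := ∏ b ∈ p.roots.toFinset, (X - C b)

/-- numerator of logarithmic derivative -/
def Apoly (p : K[X]) : K[X] :=
  ∑ b ∈ p.roots.toFinset, C ((p.roots.count b : K)) * ∏ b' ∈ p.roots.toFinset.erase b, (X - C b')

lemma Bpoly_ne_zero (p : K[X]) : Bpoly p ≠ 0 :=
  Finset.prod_ne_zero_iff.mpr fun b _ => X_sub_C_ne_zero b

lemma natDegree_Bpoly (p : K[X]) : (Bpoly p).natDegree = p.roots.toFinset.card := by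
  rw [Bpoly, natDegree_prod _ _ fun b _ => X_sub_C_ne_zero b]
  simp [natDegree_X_sub_C]

lemma natDegree_Apoly_le (p : K[X]) : (Apoly p).natDegree ≤ p.roots.toFinset.card := by
  refine natDegree_sum_le_of_forall_le _ _ fun b hb => ?_
  refine le_trans (natDegree_mul_le) ?_
  have h1 : (∏ b' ∈ p.roots.toFinset.erase b, (X - C b')).natDegree
      = (p.roots.toFinset.erase b).card := by
    rw [natDegree_prod _ _ fun b' _ => X_sub_C_ne_zero b']
    simp [natDegree_X_sub_C]
  rw [natDegree_C, h1, zero_add]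
  exact le_trans (Finset.card_le_card (Finset.erase_subset _ _)) le_rfl

lemma factorization [IsAlgClosed K] {p : K[X]} (hp : p ≠ 0) :
    p = C p.leadingCoeff * ∏ b ∈ p.roots.toFinset, (X - C b) ^ p.roots.count b := by
  conv_lhs => rw [(IsAlgClosed.splits p).eq_prod_roots]
  rw [Finset.prod_multiset_map_count]

lemma derivative_finset_prod {α : Type*} [DecidableEq α] (s : Finset α) (f : α → K[X]) :
    derivative (∏ b ∈ s, f b) = ∑ b ∈ s, (∏ b' ∈ s.erase b, f b') * derivative (f b) := by
  rw [Finset.prod_eq_multiset_prod, Polynomial.derivative_prod]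
  rfl

lemma deriv_key [IsAlgClosed K] {p : K[X]} (hp : p ≠ 0) :
    derivative p * Bpoly p = Apoly p * p := by
  set S := p.roots.toFinset with hS
  set e : K → ℕ := fun b => p.roots.count b with he
  have hfac : p = C p.leadingCoeff * ∏ b ∈ S, (X - C b) ^ e b := factorization hp
  have hq : derivative (∏ b ∈ S, (X - C b) ^ e b) * Bpoly p
      = Apoly p * ∏ b ∈ S, (X - C b) ^ e b := by
    rw [derivative_finset_prod, Finset.sum_mul, Apoly, Finset.sum_mul]
    refine Finset.sum_congr rfl fun b hb => ?_
    have hcount : 1 ≤ e b := by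
      rw [he]
      exact Multiset.one_le_count_iff_mem.mpr (Multiset.mem_toFinset.mp hb)
    have hd : derivative ((X - C b) ^ e b) = C ((e b : K)) * (X - C b) ^ (e b - 1) := by
      rw [derivative_pow, derivative_X_sub_C, mul_one]
    have hB : Bpoly p = (X - C b) * ∏ b' ∈ S.erase b, (X - C b') :=
      (Finset.mul_prod_erase S _ hb).symm
    have hprod : (∏ b' ∈ S, (X - C b') ^ e b')
        = (X - C b) ^ e b * ∏ b' ∈ S.erase b, (X - C b') ^ e b' :=
      (Finset.mul_prod_erase S _ hb).symm
    have hpow : (X - C b) ^ (e b - 1) * (X - C b) = (X - C b) ^ e b := by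
      rw [← pow_succ, Nat.sub_add_cancel hcount]
    rw [hd, hB, hprod]
    calc (∏ b' ∈ S.erase b, (X - C b') ^ e b') * (C ((e b : K)) * (X - C b) ^ (e b - 1)) *
          ((X - C b) * ∏ b' ∈ S.erase b, (X - C b'))
        = C ((e b : K)) * (∏ b' ∈ S.erase b, (X - C b')) *
          (((X - C b) ^ (e b - 1) * (X - C b)) * ∏ b' ∈ S.erase b, (X - C b') ^ e b') := by ring
      _ = _ := by rw [hpow]
  have hd0 : derivative p = C p.leadingCoeff * derivative (∏ b ∈ S, (X - C b) ^ e b) := by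
    conv_lhs => rw [hfac, derivative_C_mul]
  calc derivative p * Bpoly p
      = C p.leadingCoeff * (derivative (∏ b ∈ S, (X - C b) ^ e b) * Bpoly p) := by
        rw [hd0]; ring
    _ = C p.leadingCoeff * (Apoly p * ∏ b ∈ S, (X - C b) ^ e b) := by rw [hq]
    _ = Apoly p * (C p.leadingCoeff * ∏ b ∈ S, (X - C b) ^ e b) := by ring
    _ = Apoly p * p := by rw [← hfac]

lemma Apoly_eval {p : K[X]} {b : K} (hb : b ∈ p.roots.toFinset) :
    (Apoly p).eval b = (p.roots.count b : K) * ∏ b' ∈ p.roots.toFinset.erase b, (b - b') := by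
  rw [Apoly, eval_finset_sum]
  rw [Finset.sum_eq_single b]
  · simp [eval_prod]
  · intro c hc hcb
    have : b ∈ p.roots.toFinset.erase c := Finset.mem_erase.mpr ⟨fun h => hcb h.symm, hb⟩
    rw [eval_mul, eval_prod, Finset.prod_eq_zero this (by simp), mul_zero]
  · intro h; exact absurd hb h

lemma Apoly_eval_ne_zero [CharZero K] {p : K[X]} {b : K} (hb : b ∈ p.roots.toFinset) :
    (Apoly p).eval b ≠ 0 := by
  rw [Apoly_eval hb]
  refine mul_ne_zero ?_ ?_
  · have : 1 ≤ p.roots.count b := Multiset.one_le_count_iff_mem.mpr (Multiset.mem_toFinset.mp hb)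
    exact Nat.cast_ne_zero.mpr (Nat.one_le_iff_ne_zero.mp this)
  · refine Finset.prod_ne_zero_iff.mpr fun b' hb' => sub_ne_zero_of_ne ?_
    exact fun h => (Finset.mem_erase.mp hb').1 h.symm

lemma Bpoly_eval_eq_zero_iff {p : K[X]} {b : K} :
    (Bpoly p).eval b = 0 ↔ b ∈ p.roots.toFinset := by
  rw [Bpoly, eval_prod, Finset.prod_eq_zero_iff]
  constructor
  · rintro ⟨b', hb', h⟩
    simp only [eval_sub, eval_X, eval_C] at h
    rwa [sub_eq_zero.mp h]
  · intro hb; exact ⟨b, hb, by simp⟩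

lemma card_le_of_T_roots {D : K[X]} (hD : D ≠ 0) (T : Finset K)
    (h : ∀ t ∈ T, D.eval t = 0) : T.card ≤ D.natDegree := by
  have hle : T.val ≤ D.roots := by
    rw [Multiset.le_iff_count]
    intro a
    by_cases ha : a ∈ T
    · rw [Multiset.count_eq_one_of_mem T.nodup ha]
      exact Multiset.one_le_count_iff_mem.mpr (by rw [mem_roots hD]; exact h a ha)
    · rw [Multiset.count_eq_zero_of_notMem ha]; exact Nat.zero_le _
  calc T.card = Multiset.card T.val := rfl
    _ ≤ Multiset.card D.roots := Multiset.card_le_card hle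
    _ ≤ D.natDegree := card_roots' D

/-- The key approximation lemma. -/
lemma key [IsAlgClosed K] [CharZero K] (n : ℕ) {g : K[X]} (hg : g ≠ 0) :
    ∃ c : K[X], c ≠ 0 ∧ IsCoprime g c ∧
      ∀ h : K[X], h ≠ 0 → c ∣ h - g → h.roots.toFinset.card = n → h = g := by
  set m := g.roots.toFinset.card with hm
  set N := n + m + g.natDegree + 1 with hN
  have hinf : ((↑g.roots.toFinset : Set K)ᶜ).Infinite :=
    Set.Finite.infinite_compl (g.roots.toFinset.finite_toSet)
  obtain ⟨T, hTsub, hTcard⟩ := hinf.exists_subset_card_eq N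
  have hTroot : ∀ t ∈ T, g.eval t ≠ 0 := by
    intro t ht
    have := hTsub ht
    simp only [Set.mem_compl_iff, Finset.coe_sort_coe, Finset.mem_coe,
      Multiset.mem_toFinset, mem_roots hg] at this
    exact this
  refine ⟨∏ t ∈ T, (X - C t) ^ 2, ?_, ?_, ?_⟩
  · exact Finset.prod_ne_zero_iff.mpr fun t _ => pow_ne_zero _ (X_sub_C_ne_zero t)
  · refine IsCoprime.prod_right fun t ht => IsCoprime.pow_right ?_
    refine ((irreducible_X_sub_C t).coprime_iff_not_dvd.mpr ?_).symm
    rw [dvd_iff_isRoot]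
    exact hTroot t ht
  · intro h hh hdvd hcard
    -- pointwise consequences
    have heval : ∀ t ∈ T, h.eval t = g.eval t ∧
        (derivative h).eval t = (derivative g).eval t := by
      intro t ht
      have hd2 : (X - C t) ^ 2 ∣ h - g :=
        dvd_trans (Finset.dvd_prod_of_mem (fun t => (X - C t) ^ 2) ht) hdvd
      obtain ⟨q, hq⟩ := hd2
      constructor
      · have h0 : eval t (h - g) = 0 := by rw [hq]; simp
        rw [eval_sub, sub_eq_zero] at h0; exact h0
      · have h0 : eval t (derivative (h - g)) = 0 := by
          rw [hq, derivative_mul, derivative_X_sub_C_sq]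
          simp
        rw [derivative_sub, eval_sub, sub_eq_zero] at h0; exact h0
    -- the comparison polynomial
    set D := Apoly h * Bpoly g - Apoly g * Bpoly h with hD
    have hDval : ∀ t ∈ T, D.eval t = 0 := by
      intro t ht
      obtain ⟨h0, h1⟩ := heval t ht
      have e1 := congrArg (eval t) (deriv_key hh)
      have e2 := congrArg (eval t) (deriv_key hg)
      simp only [eval_mul] at e1 e2
      rw [h0, h1] at e1
      have hv : g.eval t ≠ 0 := hTroot t ht
      have : (Apoly h).eval t * (Bpoly g).eval t = (Apoly g).eval t * (Bpoly h).eval t := by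
        apply mul_right_cancel₀ hv
        linear_combination eval t (Bpoly h) * e2 - eval t (Bpoly g) * e1
      simp only [hD, eval_sub, eval_mul, this, sub_self]
    have hD0 : D = 0 := by
      by_contra hD0
      have hdeg : D.natDegree ≤ n + m := by
        refine le_trans (natDegree_sub_le _ _) (max_le ?_ ?_)
        · refine le_trans natDegree_mul_le ?_
          have := natDegree_Apoly_le h
          rw [hcard] at this
          rw [natDegree_Bpoly g, ← hm]
          omega
        · refine le_trans natDegree_mul_le ?_
          have := natDegree_Apoly_le g
          have h2 := natDegree_Bpoly h
          rw [hcard] at h2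
          rw [← hm] at this
          omega
      have := card_le_of_T_roots hD0 T hDval
      rw [hTcard] at this
      omega
    have hAB : Apoly h * Bpoly g = Apoly g * Bpoly h := by
      have := sub_eq_zero.mp hD0
      exact this
    -- equal root sets
    have hSect : h.roots.toFinset = g.roots.toFinset := by
      ext b
      constructor
      · intro hb
        have hthis := congrArg (eval b) hAB
        simp only [eval_mul] at hthis
        rw [show eval b (Bpoly h) = 0 from Bpoly_eval_eq_zero_iff.mpr hb, mul_zero] at hthis
        rcases mul_eq_zero.mp hthis with h1 | h1
        · exact absurd h1 (Apoly_eval_ne_zero hb)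
        · exact Bpoly_eval_eq_zero_iff.mp h1
      · intro hb
        have hthis := congrArg (eval b) hAB
        simp only [eval_mul] at hthis
        rw [show eval b (Bpoly g) = 0 from Bpoly_eval_eq_zero_iff.mpr hb, mul_zero] at hthis
        rcases mul_eq_zero.mp hthis.symm with h1 | h1
        · exact absurd h1 (Apoly_eval_ne_zero hb)
        · exact Bpoly_eval_eq_zero_iff.mp h1
    have hBeq : Bpoly h = Bpoly g := by rw [Bpoly, Bpoly, hSect]
    have hAeq : Apoly h = Apoly g := by
      apply mul_right_cancel₀ (Bpoly_ne_zero g)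
      rw [hAB, hBeq]
    -- equal multiplicities
    have hcount : ∀ b ∈ g.roots.toFinset, h.roots.count b = g.roots.count b := by
      intro b hb
      have hbh : b ∈ h.roots.toFinset := hSect ▸ hb
      have e1 := Apoly_eval (p := h) hbh
      have e2 := Apoly_eval (p := g) hb
      rw [hAeq, e2, hSect] at e1
      have hP : (∏ b' ∈ g.roots.toFinset.erase b, (b - b')) ≠ 0 := by
        refine Finset.prod_ne_zero_iff.mpr fun b' hb' => sub_ne_zero_of_ne ?_
        exact fun hEq => (Finset.mem_erase.mp hb').1 hEq.symm
      have := mul_right_cancel₀ hP e1.symm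
      exact_mod_cast this
    -- equal degrees
    have hdegs : h.natDegree = g.natDegree := by
      have hh' : h.natDegree = Multiset.card h.roots := by
        have := (IsAlgClosed.splits h).natDegree_eq_card_roots
        exact this
      have hg' : g.natDegree = Multiset.card g.roots := by
        have := (IsAlgClosed.splits g).natDegree_eq_card_roots
        exact this
      rw [hh', hg', ← Multiset.toFinset_sum_count_eq, ← Multiset.toFinset_sum_count_eq, hSect]
      exact Finset.sum_congr rfl hcount
    -- conclude
    by_contra hne
    have hsub : h - g ≠ 0 := sub_ne_zero_of_ne hne
    have hcle : (∏ t ∈ T, (X - C t) ^ 2).natDegree ≤ (h - g).natDegree :=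
      natDegree_le_of_dvd hdvd hsub
    have hcdeg : (∏ t ∈ T, (X - C t) ^ 2).natDegree = 2 * N := by
      rw [natDegree_prod _ _ fun t _ => pow_ne_zero _ (X_sub_C_ne_zero t)]
      simp only [natDegree_pow, natDegree_X_sub_C, mul_one]
      rw [Finset.sum_const, hTcard, smul_eq_mul, mul_comm]
    have hsubdeg : (h - g).natDegree ≤ g.natDegree :=
      le_trans (natDegree_sub_le _ _) (by rw [hdegs]; exact max_le le_rfl le_rfl)
    omega

lemma span_X_sub_C_isMaximal (a : K) : (Ideal.span {X - C a} : Ideal K[X]).IsMaximal :=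
  PrincipalIdealRing.isMaximal_of_irreducible (irreducible_X_sub_C a)

lemma mem_span_X_sub_C_iff {p : K[X]} {a : K} :
    p ∈ Ideal.span ({X - C a} : Set K[X]) ↔ p.IsRoot a := by
  rw [Ideal.mem_span_singleton, dvd_iff_isRoot]

lemma span_X_sub_C_inj : Function.Injective (fun a : K => Ideal.span ({X - C a} : Set K[X])) := by
  intro a b hab
  simp only [Ideal.span_singleton_eq_span_singleton] at hab
  have := eq_of_monic_of_associated (monic_X_sub_C a) (monic_X_sub_C b) hab
  have h2 := congrArg (fun p => -Polynomial.eval 0 p) this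
  simpa using h2

omit [DecidableEq K] in
lemma maximal_classify [IsAlgClosed K] {P : Ideal K[X]} (hP : P.IsMaximal) :
    ∃ a : K, P = Ideal.span {X - C a} := by
  obtain ⟨p, hp⟩ := IsPrincipalIdealRing.principal P
  rw [Ideal.submodule_span_eq] at hp
  have hp0 : p ≠ 0 := by
    rintro rfl
    rw [Ideal.span_singleton_eq_bot.mpr rfl] at hp
    rw [hp] at hP
    have h1 : (Ideal.span {(X : K[X])}) = ⊥ := by
      refine (hP.eq_of_le ?_ bot_le).symm
      rw [ne_eq, Ideal.span_singleton_eq_top]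
      exact not_isUnit_X
    rw [Ideal.span_singleton_eq_bot] at h1
    exact X_ne_zero h1
  have hprime : Prime p := by
    rw [← Ideal.span_singleton_prime hp0, ← hp]
    exact hP.isPrime
  have hirr : Irreducible p := hprime.irreducible
  have hdeg : p.degree = 1 := IsAlgClosed.degree_eq_one_of_irreducible K hirr
  obtain ⟨c1, c0, hcp, hc1'⟩ : ∃ c1 c0 : K, p = C c1 * X + C c0 ∧ c1 ≠ 0 :=
    ⟨p.leadingCoeff, p.coeff 0, eq_X_add_C_of_degree_eq_one hdeg, leadingCoeff_ne_zero.mpr hp0⟩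
  refine ⟨-c0 / c1, ?_⟩
  rw [hp, Ideal.span_singleton_eq_span_singleton]
  have hpeq : p = C c1 * (X - C (-c0 / c1)) := by
    rw [hcp, mul_sub, ← C_mul]
    have : c1 * (-c0 / c1) = -c0 := by field_simp
    rw [this, map_neg, sub_neg_eq_add]
  refine Associated.symm ⟨(isUnit_C.mpr hc1'.isUnit).unit, ?_⟩
  rw [IsUnit.unit_spec, hpeq]; ring

lemma mem_golombGn_iff [IsAlgClosed K] (x : GolombSpace K[X]) (n : ℕ) :
    x ∈ golombGn K[X] n ↔ (x : K[X]).roots.toFinset.card = n := by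
  classical
  constructor
  · rintro ⟨Δ, hcard, hmax, hiff⟩
    have hΔ : Δ = (x : K[X]).roots.toFinset.image
        (fun a => Ideal.span ({X - C a} : Set K[X])) := by
      ext P
      constructor
      · intro hPΔ
        have hPmax := hmax P hPΔ
        obtain ⟨a, rfl⟩ := maximal_classify hPmax
        refine Finset.mem_image.mpr ⟨a, ?_, rfl⟩
        rw [Multiset.mem_toFinset, mem_roots x.2]
        exact mem_span_X_sub_C_iff.mp ((hiff _ hPmax).mpr hPΔ)
      · intro hP
        obtain ⟨a, ha, rfl⟩ := Finset.mem_image.mp hP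
        refine (hiff _ (span_X_sub_C_isMaximal a)).mp ?_
        rw [mem_span_X_sub_C_iff]
        rw [Multiset.mem_toFinset, mem_roots x.2] at ha
        exact ha
    rw [hΔ, Finset.card_image_of_injective _ span_X_sub_C_inj] at hcard
    exact hcard
  · intro hcard
    refine ⟨(x : K[X]).roots.toFinset.image (fun a => Ideal.span ({X - C a} : Set K[X])),
      ?_, ?_, ?_⟩
    · rw [Finset.card_image_of_injective _ span_X_sub_C_inj, hcard]
    · intro P hP
      obtain ⟨a, _, rfl⟩ := Finset.mem_image.mp hP
      exact span_X_sub_C_isMaximal a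
    · intro P hPmax
      obtain ⟨a, rfl⟩ := maximal_classify hPmax
      rw [mem_span_X_sub_C_iff]
      constructor
      · intro hroot
        refine Finset.mem_image.mpr ⟨a, ?_, rfl⟩
        rw [Multiset.mem_toFinset, mem_roots x.2]
        exact hroot
      · intro hP
        obtain ⟨b, hb, hba⟩ := Finset.mem_image.mp hP
        have := span_X_sub_C_inj hba
        rw [Multiset.mem_toFinset, mem_roots x.2] at hb
        rwa [← this]

lemma isOpen_coset (x : GolombSpace K[X]) {c : K[X]} (hc : c ≠ 0)
    (hcop : IsCoprime (x : K[X]) c) :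
    IsOpen {y : GolombSpace K[X] | ∃ i ∈ Ideal.span ({c} : Set K[X]), (y : K[X]) = ↑x + i} := by
  refine TopologicalSpace.isOpen_generateFrom_of_mem ?_
  refine ⟨(x : K[X]), Ideal.span {c}, x.2, ?_, ?_, rfl⟩
  · rw [ne_eq, Ideal.span_singleton_eq_bot]; exact hc
  · exact (Ideal.sup_eq_top_iff_isCoprime _ _).mpr hcop

lemma mem_coset_iff (x y : GolombSpace K[X]) (c : K[X]) :
    (∃ i ∈ Ideal.span ({c} : Set K[X]), (y : K[X]) = ↑x + i) ↔ c ∣ ((y : K[X]) - ↑x) := by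
  constructor
  · rintro ⟨i, hi, hyi⟩
    rw [Ideal.mem_span_singleton] at hi
    rwa [hyi, add_sub_cancel_left]
  · intro hdvd
    refine ⟨(y : K[X]) - ↑x, ?_, ?_⟩
    · rw [Ideal.mem_span_singleton]; exact hdvd
    · ring

end GolombAux


/-- If `K` is an algebraically closed field of characteristic `0`, then for every
`n ≥ 0` the set `G_n(K[X])` is a discrete subspace of the Golomb space `G(K[X])` and is
closed in `G(K[X])`. -/
theorem golombGn_discrete_closed_of_algClosed_charZero (K : Type*) [Field K] [IsAlgClosed K]
    [CharZero K] (n : ℕ) :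
    DiscreteTopology (golombGn (Polynomial K) n) ∧ IsClosed (golombGn (Polynomial K) n) := by
  classical
  constructor
  · rw [discreteTopology_iff_isOpen_singleton]
    rintro ⟨x, hx⟩
    have hcard : (x : K[X]).roots.toFinset.card = n := (GolombAux.mem_golombGn_iff x n).mp hx
    obtain ⟨c, hc0, hcop, hkey⟩ := GolombAux.key n x.2
    refine isOpen_induced_iff.mpr
      ⟨{y : GolombSpace K[X] | ∃ i ∈ Ideal.span ({c} : Set K[X]), (y : K[X]) = ↑x + i},
        GolombAux.isOpen_coset x hc0 hcop, ?_⟩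
    ext ⟨y, hy⟩
    simp only [Set.mem_preimage, Set.mem_setOf_eq, Set.mem_singleton_iff, Subtype.ext_iff]
    rw [GolombAux.mem_coset_iff]
    constructor
    · intro hdvd
      have := hkey (y : K[X]) y.2 hdvd ((GolombAux.mem_golombGn_iff y n).mp hy)
      exact this
    · intro h
      rw [h, sub_self]
      exact dvd_zero c
  · rw [← isOpen_compl_iff, isOpen_iff_forall_mem_open]
    rintro x hx
    obtain ⟨c, hc0, hcop, hkey⟩ := GolombAux.key n x.2
    refine ⟨{y : GolombSpace K[X] | ∃ i ∈ Ideal.span ({c} : Set K[X]), (y : K[X]) = ↑x + i},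
      ?_, GolombAux.isOpen_coset x hc0 hcop, ?_⟩
    · intro y hy
      rw [Set.mem_setOf_eq, GolombAux.mem_coset_iff] at hy
      intro hyG
      have := hkey (y : K[X]) y.2 hy ((GolombAux.mem_golombGn_iff y n).mp hyG)
      exact hx (Subtype.ext this ▸ hyG)
    · exact ⟨0, Ideal.zero_mem _, by simp⟩


end
end

section
/- Let K be a field of characteristic p > 0 that is transcendental over its prime field 𝔽_p. Then K is separably closed if and only if for every pair of coprime irreducible polynomials f, g ∈ K[X], every unit of K[X] (i.e., every element of K ∖ {0}) is contained in the closure of ⟨g⟩ in the (f)-topology on K[X] ∖ (f). -/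
open Polynomial Filter

noncomputable section

section Aux

variable {K : Type*} [Field K]

/-- Over a separably closed field of char `p`, every irreducible polynomial has the form
`C a * (X ^ p ^ k - C d)`. -/
theorem irred_decomp (p : ℕ) [Fact p.Prime] [CharP K p] [IsSepClosed K] :
    ∀ (N : ℕ) (r : K[X]), r.natDegree ≤ N → Irreducible r →
      ∃ (a d : K) (k : ℕ), a ≠ 0 ∧ r = C a * (X ^ p ^ k - C d) := by
  have hp2 : 2 ≤ p := (Fact.out : p.Prime).two_le
  intro N
  induction N with
  | zero =>
      intro r hN hr
      exfalso
      obtain ⟨x, hx⟩ := Polynomial.natDegree_eq_zero.mp (Nat.le_zero.mp hN)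
      have hx0 : x ≠ 0 := fun h => hr.ne_zero (by rw [← hx, h, map_zero])
      exact hr.not_isUnit (hx ▸ (Polynomial.isUnit_C.mpr (isUnit_iff_ne_zero.mpr hx0)))
  | succ N ih =>
      intro r hN hr
      have hr0 : r ≠ 0 := hr.ne_zero
      have hnd : r.natDegree ≠ 0 := by
        intro h0
        obtain ⟨x, hx⟩ := Polynomial.natDegree_eq_zero.mp h0
        have hx0 : x ≠ 0 := fun h => hr0 (by rw [← hx, h, map_zero])
        exact hr.not_isUnit (hx ▸ (Polynomial.isUnit_C.mpr (isUnit_iff_ne_zero.mpr hx0)))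
      by_cases hsep : r.Separable
      · have hdeg : r.degree = 1 := (IsSepClosed.splits_of_separable r hsep).degree_eq_one_of_irreducible hr
        have hnd1 : r.natDegree = 1 := natDegree_eq_of_degree_eq_some hdeg
        have hc1 : r.coeff 1 ≠ 0 := by
          have := Polynomial.coeff_natDegree (p := r)
          rw [hnd1] at this
          rw [this]
          exact leadingCoeff_ne_zero.mpr hr0
        refine ⟨r.coeff 1, -(r.coeff 0 / r.coeff 1), 0, hc1, ?_⟩
        have hrep : r = C (r.coeff 1) * X + C (r.coeff 0) :=
          eq_X_add_C_of_degree_le_one (le_of_eq hdeg)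
        rw [pow_zero, pow_one, mul_sub, ← C_mul, mul_neg,
          mul_div_cancel₀ _ hc1, map_neg, sub_neg_eq_add]
        exact hrep
      · have hder : derivative r = 0 := by
          rw [Polynomial.separable_iff_derivative_ne_zero hr, not_not] at hsep
          exact hsep
        have hexp : expand K p (contract p r) = r :=
          Polynomial.expand_contract p hder (Fact.out : p.Prime).ne_zero
        have hirr : Irreducible (contract p r) :=
          Polynomial.of_irreducible_expand (Fact.out : p.Prime).ne_zero (hexp.symm ▸ hr)
        have hdegeq : r.natDegree = p * (contract p r).natDegree := by
          conv_lhs => rw [← hexp]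
          rw [Polynomial.natDegree_expand]
          ring
        have hcd : (contract p r).natDegree ≤ N := by
          have h1 : (contract p r).natDegree ≠ 0 := by
            intro h0
            rw [h0, mul_zero] at hdegeq
            exact hnd hdegeq
          have h2 : (contract p r).natDegree < p * (contract p r).natDegree := by
            nlinarith [Nat.pos_of_ne_zero h1]
          omega
        obtain ⟨a, d, k, ha, hd⟩ := ih _ hcd hirr
        refine ⟨a, d, k + 1, ha, ?_⟩
        rw [← hexp, hd, map_mul, map_sub, Polynomial.expand_C, map_pow,
          Polynomial.expand_X, ← pow_mul, Polynomial.expand_C]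
        ring_nf

/-- Key congruence: some power of `g` is congruent to a nonzero constant mod `f ^ n`. -/
theorem key_cong (p : ℕ) [Fact p.Prime] [CharP K p]
    {f g : K[X]} (hf : Irreducible f) (hco : IsCoprime f g)
    {af df : K} {kf : ℕ} (haf : af ≠ 0) (hfd : f = C af * (X ^ p ^ kf - C df))
    {ag dg : K} {kg : ℕ} (hgd : g = C ag * (X ^ p ^ kg - C dg))
    (n : ℕ) (hn : 1 ≤ n) :
    ∃ (m : ℕ) (c₀ : K), 1 ≤ m ∧ c₀ ≠ 0 ∧ f ^ n ∣ g ^ m - C c₀ := by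
  have hp1 : 1 < p := (Fact.out : p.Prime).one_lt
  set m : ℕ := p ^ (kf + n) with hm
  set c₀ : K := ag ^ m * (df ^ (p ^ kg * p ^ n) - dg ^ m) with hc₀
  set w : K[X] := X ^ p ^ kf - C df with hw
  set h : K[X] := X ^ (p ^ kf * p ^ kg) - C (df ^ p ^ kg) with hh
  have claim1 : w ∣ h := by
    have := sub_dvd_pow_sub_pow (X ^ p ^ kf : K[X]) (C df) (p ^ kg)
    rwa [← pow_mul, ← map_pow] at this
  have claim3 : g ^ m - C c₀ = C (ag ^ m) * h ^ p ^ n := by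
    have e1 : g ^ m = C (ag ^ m) * ((X : K[X]) ^ (p ^ kf * p ^ kg * p ^ n) - C (dg ^ m)) := by
      rw [hgd, mul_pow, hm, sub_pow_char_pow, ← map_pow, ← map_pow, ← pow_mul]
      rw [show p ^ kg * p ^ (kf + n) = p ^ kf * p ^ kg * p ^ n by rw [pow_add]; ring]
    have e2 : h ^ p ^ n = (X : K[X]) ^ (p ^ kf * p ^ kg * p ^ n) - C (df ^ (p ^ kg * p ^ n)) := by
      rw [hh, sub_pow_char_pow, ← pow_mul, ← map_pow, ← pow_mul]
    rw [e1, e2, hc₀]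
    simp only [map_mul, map_sub, map_pow]
    ring
  have hwf : Associated (w ^ n) (f ^ n) := by
    refine Associated.pow_pow ⟨(Polynomial.isUnit_C.mpr (isUnit_iff_ne_zero.mpr haf)).unit, ?_⟩
    rw [IsUnit.unit_spec, hfd]; ring
  have hdvd : f ^ n ∣ g ^ m - C c₀ := by
    rw [claim3]
    refine Dvd.dvd.mul_left ?_ _
    rw [← hwf.dvd_iff_dvd_left]
    exact dvd_trans (pow_dvd_pow_of_dvd claim1 n) (pow_dvd_pow h (le_of_lt (Nat.lt_pow_self hp1)))
  refine ⟨m, c₀, Nat.one_le_iff_ne_zero.mpr (pow_ne_zero _ (by omega)), ?_, hdvd⟩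
  intro h0
  rw [h0, map_zero, sub_zero] at hdvd
  have hfg : f ∣ g ^ m := dvd_trans (dvd_pow_self f (Nat.one_le_iff_ne_zero.mp hn)) hdvd
  have : f ∣ g := hf.prime.dvd_of_dvd_pow hfg
  exact hf.not_isUnit (hco.isUnit_of_dvd' dvd_rfl this)

/-- Every open set containing a point in the `P`-topology contains a coset `x₀ + Pⁿ`. -/
theorem coset_subset {R : Type*} [CommRing R] (P : Ideal R)
    (x₀ : {x : R // x ∉ P}) {U : Set {x : R // x ∉ P}} (hU : IsOpen U) (hx : x₀ ∈ U) :
    ∃ n, 1 ≤ n ∧ {y : {x : R // x ∉ P} | ∃ b ∈ P ^ n, (y : R) = (x₀ : R) + b} ⊆ U := by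
  have hU' : TopologicalSpace.GenerateOpen
      {S : Set {x : R // x ∉ P} | ∃ (a : R) (n : ℕ), a ∉ P ∧ 1 ≤ n ∧
        S = {y : {x : R // x ∉ P} | ∃ b ∈ P ^ n, (y : R) = a + b}} U := hU
  clear hU
  revert hx
  induction hU' with
  | basic S hS =>
      intro hx
      obtain ⟨a, n, haP, hn, rfl⟩ := hS
      obtain ⟨b0, hb0, hx0⟩ := hx
      refine ⟨n, hn, fun y hy => ?_⟩
      obtain ⟨b, hb, hyb⟩ := hy
      exact ⟨b0 + b, add_mem hb0 hb, by rw [hyb, hx0, add_assoc]⟩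
  | univ => exact fun _ => ⟨1, le_rfl, fun _ _ => trivial⟩
  | inter U V hUo hVo ihU ihV =>
      intro hx
      obtain ⟨n1, hn1, h1⟩ := ihU hx.1
      obtain ⟨n2, hn2, h2⟩ := ihV hx.2
      refine ⟨max n1 n2, le_trans hn1 (le_max_left _ _), fun y hy => ?_⟩
      obtain ⟨b, hb, hyb⟩ := hy
      exact ⟨h1 ⟨b, Ideal.pow_le_pow_right (le_max_left _ _) hb, hyb⟩,
             h2 ⟨b, Ideal.pow_le_pow_right (le_max_right _ _) hb, hyb⟩⟩
  | sUnion S hSo ih =>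
      intro hx
      obtain ⟨U, hUS, hxU⟩ := hx
      obtain ⟨n, hn, hss⟩ := ih U hUS hxU
      exact ⟨n, hn, hss.trans (Set.subset_sUnion_of_mem hUS)⟩

end Aux

/-- Let `K` be a field of characteristic `p > 0` that is transcendental over its
prime field `𝔽_p`. Then `K` is separably closed if and only if for every pair of coprime
irreducible polynomials `f, g ∈ K[X]`, every unit of `K[X]` (i.e. every nonzero constant)
lies in the closure of `⟨g⟩` in the `(f)`-topology on `K[X] ∖ (f)`. -/
theorem isSepClosed_iff_units_in_closure_pow (K : Type*) [Field K] (p : ℕ) [Fact p.Prime]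
    [CharP K p] [Algebra (ZMod p) K] (htrans : ¬ Algebra.IsAlgebraic (ZMod p) K) :
    IsSepClosed K ↔
      ∀ f g : K[X], Irreducible f → Irreducible g → IsCoprime f g →
        ∀ u : K, u ≠ 0 →
          (C u : K[X]) ∈ Subtype.val ''
            (closure {x : {y : K[X] // y ∉ Ideal.span {f}} |
              ∃ (v : K[X]) (n : ℕ), IsUnit v ∧ 1 ≤ n ∧ (x : K[X]) = v * g ^ n}) := by
  constructor
  · -- forward direction
    intro hsc f g hf hg hco u hu
    haveI := hsc
    have hCu : (C u : K[X]) ∉ Ideal.span {f} := by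
      rw [Ideal.mem_span_singleton]
      intro hdvd
      have h1 : f.natDegree ≤ (C u : K[X]).natDegree :=
        natDegree_le_of_dvd hdvd (by simpa using hu)
      rw [natDegree_C] at h1
      obtain ⟨x, hx⟩ := Polynomial.natDegree_eq_zero.mp (Nat.le_zero.mp h1)
      have hx0 : x ≠ 0 := fun h => hf.ne_zero (by rw [← hx, h, map_zero])
      exact hf.not_isUnit (hx ▸ (Polynomial.isUnit_C.mpr (isUnit_iff_ne_zero.mpr hx0)))
    obtain ⟨af, df, kf, haf, hfd⟩ := irred_decomp p f.natDegree f le_rfl hf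
    obtain ⟨ag, dg, kg, hag, hgd⟩ := irred_decomp p g.natDegree g le_rfl hg
    refine ⟨⟨C u, hCu⟩, ?_, rfl⟩
    rw [mem_closure_iff]
    intro U hU hxU
    obtain ⟨n, hn, hsub⟩ := coset_subset _ _ hU hxU
    obtain ⟨m, c₀, hm, hc₀, hdvd⟩ := key_cong p hf hco haf hfd hgd n hn
    have hvu : IsUnit (C (u * c₀⁻¹) : K[X]) :=
      Polynomial.isUnit_C.mpr (isUnit_iff_ne_zero.mpr (mul_ne_zero hu (inv_ne_zero hc₀)))
    have hynot : (C (u * c₀⁻¹) : K[X]) * g ^ m ∉ Ideal.span {f} := by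
      rw [Ideal.mem_span_singleton]
      intro hd
      have hfg : f ∣ g ^ m := (hvu.dvd_mul_left).mp hd
      have : f ∣ g := hf.prime.dvd_of_dvd_pow hfg
      exact hf.not_isUnit (hco.isUnit_of_dvd' dvd_rfl this)
    refine ⟨⟨C (u * c₀⁻¹) * g ^ m, hynot⟩, hsub ⟨C (u * c₀⁻¹) * (g ^ m - C c₀), ?_, ?_⟩,
      ⟨C (u * c₀⁻¹), m, hvu, hm, rfl⟩⟩
    · rw [Ideal.span_singleton_pow, Ideal.mem_span_singleton]
      exact hdvd.mul_left _
    · show (C (u * c₀⁻¹) : K[X]) * g ^ m = C u + C (u * c₀⁻¹) * (g ^ m - C c₀)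
      rw [mul_sub, ← C_mul, inv_mul_cancel_right₀ hc₀]
      ring
  · -- reverse direction
    intro hrhs
    by_contra hns
    refine htrans ?_
    have hex : ∃ q : K[X], q.Separable ∧ ¬ q.Splits := by
      by_contra h'
      push_neg at h'
      exact hns ⟨fun q hq => h' q hq⟩
    obtain ⟨q, hqsep, hqns⟩ := hex
    have hex2 : ∃ f : K[X], Irreducible f ∧ f ∣ q ∧ f.degree ≠ 1 := by
      by_contra hall
      push_neg at hall
      exact hqns (splits_iff_splits.mpr (Or.inr (fun {g'} hg' hgd' => hall g' hg' (by simpa using hgd'))))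
    obtain ⟨f, hfirr, hfdvd, hfdeg⟩ := hex2
    have hfsep : f.Separable := hqsep.of_dvd hfdvd
    have hf0 : f ≠ 0 := hfirr.ne_zero
    have hfnd : 2 ≤ f.natDegree := by
      have h1 : f.natDegree ≠ 0 := by
        intro h0
        obtain ⟨x, hx⟩ := Polynomial.natDegree_eq_zero.mp h0
        have hx0 : x ≠ 0 := fun h => hf0 (by rw [← hx, h, map_zero])
        exact hfirr.not_isUnit (hx ▸ (Polynomial.isUnit_C.mpr (isUnit_iff_ne_zero.mpr hx0)))
      have h2 : f.natDegree ≠ 1 := by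
        intro h1'
        exact hfdeg (by rw [degree_eq_natDegree hf0, h1']; rfl)
      omega
    set M := AlgebraicClosure K
    set i := algebraMap K M with hi
    classical
    have hsplits : (f.map i).Splits := IsAlgClosed.splits _
    have hnodup : (f.map i).roots.Nodup := nodup_roots hfsep.map
    have h2card : 1 < (f.map i).roots.toFinset.card := by
      rw [Multiset.toFinset_card_eq_card_iff_nodup.mpr hnodup,
        ← hsplits.natDegree_eq_card_roots, natDegree_map]
      omega
    obtain ⟨α₁, hα₁, α₂, hα₂, hne⟩ := Finset.one_lt_card.mp h2card
    have hroot : ∀ α ∈ (f.map i).roots.toFinset, aeval α f = 0 := by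
      intro α hα
      have := (Polynomial.mem_roots'.mp (Multiset.mem_toFinset.mp hα)).2
      rwa [Polynomial.IsRoot.def, Polynomial.eval_map, ← Polynomial.aeval_def] at this
    have hroot₁ := hroot α₁ hα₁
    have hroot₂ := hroot α₂ hα₂
    have key : ∀ c : K, ∃ ζ : M, IsIntegral (ZMod p) ζ ∧ ζ ≠ 1 ∧
        (α₁ - i c) = ζ * (α₂ - i c) := by
      intro c
      have hgirr : Irreducible (X - C c : K[X]) := irreducible_X_sub_C c
      have hndvd : ¬ f ∣ (X - C c : K[X]) := by
        intro hd
        have := natDegree_le_of_dvd hd (X_sub_C_ne_zero c)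
        rw [natDegree_X_sub_C] at this
        omega
      have hcop : IsCoprime f (X - C c : K[X]) := hfirr.coprime_iff_not_dvd.mpr hndvd
      obtain ⟨xbar, hxcl, hxval⟩ := hrhs f (X - C c) hfirr hgirr hcop 1 one_ne_zero
      have h1P : (1 : K[X]) ∉ Ideal.span {f} := by
        rw [Ideal.mem_span_singleton]
        exact fun hd => hfirr.not_isUnit (isUnit_of_dvd_one hd)
      have hU₁open : IsOpen {y : {x : K[X] // x ∉ Ideal.span {f}} |
          ∃ b ∈ (Ideal.span {f} : Ideal K[X]) ^ 1, (y : K[X]) = 1 + b} :=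
        TopologicalSpace.isOpen_generateFrom_of_mem ⟨1, 1, h1P, le_rfl, rfl⟩
      have hxU₁ : xbar ∈ {y : {x : K[X] // x ∉ Ideal.span {f}} |
          ∃ b ∈ (Ideal.span {f} : Ideal K[X]) ^ 1, (y : K[X]) = 1 + b} :=
        ⟨0, zero_mem _, by rw [hxval, map_one, add_zero]⟩
      obtain ⟨y, hyU₁, hyS⟩ := (mem_closure_iff.mp hxcl) _ hU₁open hxU₁
      obtain ⟨v, m, hv, hm, hval⟩ := hyS
      obtain ⟨b, hb, hyb⟩ := hyU₁
      obtain ⟨w, hw, rfl⟩ := Polynomial.isUnit_iff.mp hv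
      have hfb : f ∣ b := Ideal.mem_span_singleton.mp (by rwa [pow_one] at hb)
      obtain ⟨t, rfl⟩ := hfb
      have heq : (C w : K[X]) * (X - C c) ^ m = 1 + f * t := by rw [← hval, hyb]
      have ev : ∀ α : M, aeval α f = 0 → (i w) * (α - i c) ^ m = 1 := by
        intro α hα
        have := congrArg (aeval α) heq
        simpa [hα] using this
      have e₁ := ev α₁ hroot₁
      have e₂ := ev α₂ hroot₂
      have hB : α₂ - i c ≠ 0 := by
        intro h0
        rw [h0, zero_pow (Nat.one_le_iff_ne_zero.mp hm), mul_zero] at e₂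
        exact zero_ne_one e₂
      have hiw : (i w : M) ≠ 0 := by
        intro h0
        rw [h0, zero_mul] at e₁
        exact zero_ne_one e₁
      have hAB : (α₁ - i c) ^ m = (α₂ - i c) ^ m := mul_left_cancel₀ hiw (e₁.trans e₂.symm)
      have hζm : ((α₁ - i c) / (α₂ - i c)) ^ m = 1 := by
        rw [div_pow, hAB, div_self (pow_ne_zero m hB)]
      refine ⟨(α₁ - i c) / (α₂ - i c), ?_, ?_, ?_⟩
      · refine ⟨X ^ m - C 1, monic_X_pow_sub_C 1 (Nat.one_le_iff_ne_zero.mp hm), ?_⟩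
        simp [hζm]
      · intro h1
        rw [div_eq_one_iff_eq hB] at h1
        exact hne (by rwa [sub_left_inj] at h1)
      · rw [div_mul_cancel₀ _ hB]
    obtain ⟨ζ₀, hζ₀int, hζ₀ne, hζ₀eq⟩ := key 0
    rw [map_zero, sub_zero, sub_zero] at hζ₀eq
    have gen : ∀ c : K, ∃ ζ : M, IsIntegral (ZMod p) ζ ∧ ζ ≠ 1 ∧
        i c * (ζ - 1) = (ζ - ζ₀) * α₂ := by
      intro c
      obtain ⟨ζ, h1, h2, h3⟩ := key c
      exact ⟨ζ, h1, h2, by linear_combination h3 - hζ₀eq⟩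
    obtain ⟨ζ₁, hζ₁int, hζ₁ne, hζ₁eq⟩ := gen 1
    rw [map_one, one_mul] at hζ₁eq
    have hd1 : ζ₁ - ζ₀ ≠ 0 := by
      intro h0
      rw [h0, zero_mul] at hζ₁eq
      exact hζ₁ne (by linear_combination hζ₁eq)
    have hα₂int : IsIntegral (ZMod p) α₂ := by
      have hα₂eq : α₂ = (ζ₁ - 1) * (ζ₁ - ζ₀)⁻¹ := by
        rw [eq_mul_inv_iff_mul_eq₀ hd1]
        linear_combination -hζ₁eq
      rw [hα₂eq]
      exact (hζ₁int.sub isIntegral_one).mul (hζ₁int.sub hζ₀int).inv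
    refine ⟨fun c => ?_⟩
    obtain ⟨ζ, hint, hneq, heq⟩ := gen c
    have hζ1 : ζ - 1 ≠ 0 := sub_ne_zero.mpr hneq
    have hic : i c = (ζ - ζ₀) * α₂ * (ζ - 1)⁻¹ := by
      rw [eq_mul_inv_iff_mul_eq₀ hζ1]
      linear_combination heq
    have hint2 : IsIntegral (ZMod p) (i c) := by
      rw [hic]
      exact ((hint.sub hζ₀int).mul hα₂int).mul (hint.sub isIntegral_one).inv
    exact (isAlgebraic_algebraMap_iff (algebraMap K M).injective).mp hint2.isAlgebraic

end
end

section
/- Let K be a separably closed field of characteristic p > 0. Then G_1(K[X]) is not dense in the Golomb space G(K[X]). -/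
open Polynomial Filter

noncomputable section

/-- A separably closed field is infinite. -/
theorem mySepInfinite (K : Type*) [Field K] [IsSepClosed K] : Infinite K := by
  apply Infinite.of_not_fintype
  intro hfin
  set q := Fintype.card K with hq
  have hq2 : 2 ≤ q := Fintype.one_lt_card
  set g : K[X] := X ^ q - X + 1 with hg
  have hc : ((q : ℕ) : K) = 0 := FiniteField.cast_card_eq_zero K
  have hdg : g.derivative = -1 := by
    simp [hg, derivative_X_pow, hc]
  have hsep : g.Separable := by
    rw [Polynomial.Separable, hdg]
    exact (isCoprime_one_right).neg_right
  have hdeg : g.degree = q := by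
    have h2 : g = X ^ q + (1 - X) := by rw [hg]; ring
    have h3 : (1 - X : K[X]).degree < (X ^ q : K[X]).degree := by
      rw [degree_X_pow]
      refine lt_of_le_of_lt (degree_sub_le _ _) ?_
      rw [degree_one, degree_X]
      have : ((1:ℕ) : WithBot ℕ) < (q : WithBot ℕ) := by exact_mod_cast hq2
      simpa using this
    rw [h2, degree_add_eq_left_of_degree_lt h3, degree_X_pow]
  obtain ⟨x, hx⟩ := IsSepClosed.exists_root g (by rw [hdeg]; simp; omega) hsep
  rw [hg] at hx
  simp [Polynomial.IsRoot] at hx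
  rw [FiniteField.pow_card] at hx
  simp at hx

/-- In a PID, an element contained in exactly one maximal ideal is a unit
times a power of an irreducible element. -/
theorem myFactor {R : Type*} [CommRing R] [IsDomain R] [IsPrincipalIdealRing R]
    [NormalizationMonoid R]
    (f : R) (hf0 : f ≠ 0)
    (h : ∃ Δ : Finset (Ideal R), Δ.card = 1 ∧ (∀ P ∈ Δ, P.IsMaximal) ∧
      (∀ P : Ideal R, P.IsMaximal → (f ∈ P ↔ P ∈ Δ))) :
    ∃ (u r : R) (n : ℕ), IsUnit u ∧ Irreducible r ∧ 1 ≤ n ∧ f = u * r ^ n := by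
  obtain ⟨Δ, hcard, hmax, hiff⟩ := h
  obtain ⟨P₀, rfl⟩ := Finset.card_eq_one.mp hcard
  have hP₀ : P₀.IsMaximal := hmax P₀ (Finset.mem_singleton_self P₀)
  have hfP₀ : f ∈ P₀ := (hiff P₀ hP₀).mpr (Finset.mem_singleton_self P₀)
  have hfu : ¬ IsUnit f := fun hu => hP₀.ne_top (Ideal.eq_top_of_isUnit_mem P₀ hfP₀ hu)
  set m := UniqueFactorizationMonoid.normalizedFactors f with hm
  have hprod : Associated m.prod f := UniqueFactorizationMonoid.prod_normalizedFactors hf0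
  have hm0 : m ≠ 0 := by
    intro h0
    rw [h0, Multiset.prod_zero] at hprod
    exact hfu (hprod.isUnit isUnit_one)
  obtain ⟨r₀, hr₀⟩ := Multiset.exists_mem_of_ne_zero hm0
  have key : ∀ r ∈ m, r = r₀ := by
    have hspan : ∀ s ∈ m, Ideal.span {s} = P₀ := by
      intro s hs
      have hirr : Irreducible s :=
        UniqueFactorizationMonoid.irreducible_of_normalized_factor s hs
      have hmax' : (Ideal.span {s}).IsMaximal :=
        PrincipalIdealRing.isMaximal_of_irreducible hirr
      have hmem : f ∈ Ideal.span {s} :=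
        Ideal.mem_span_singleton.mpr
          (UniqueFactorizationMonoid.dvd_of_mem_normalizedFactors hs)
      have := (hiff _ hmax').mp hmem
      simpa using this
    intro r hr
    have hass : Associated r r₀ := by
      rw [← Ideal.span_singleton_eq_span_singleton, hspan r hr, hspan r₀ hr₀]
    rw [← UniqueFactorizationMonoid.normalize_normalized_factor r hr,
      ← UniqueFactorizationMonoid.normalize_normalized_factor r₀ hr₀]
    exact normalize_eq_normalize hass.dvd hass.symm.dvd
  have hrep : m = Multiset.replicate (Multiset.card m) r₀ :=
    Multiset.eq_replicate.mpr ⟨rfl, key⟩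
  have hprod2 : Associated (r₀ ^ Multiset.card m) f := by
    rwa [hrep, Multiset.prod_replicate] at hprod
  obtain ⟨u, hu⟩ := hprod2
  refine ⟨u, r₀, Multiset.card m, u.isUnit,
    UniqueFactorizationMonoid.irreducible_of_normalized_factor r₀ hr₀,
    Multiset.card_pos.mpr hm0, ?_⟩
  rw [← hu]; ring

/-- If `K` is a separably closed field of characteristic `p > 0`, then
`G₁(K[X])` is not dense in the Golomb space `G(K[X])`. -/
theorem golombG1_not_dense_of_sepClosed (K : Type*) [Field K] [IsSepClosed K]
    (p : ℕ) [Fact p.Prime] [CharP K p] :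
    ¬ Dense (golombGn (Polynomial K) 1) := by
  intro hdense
  haveI : Infinite K := mySepInfinite K
  letI : NormalizationMonoid K[X] := UniqueFactorizationMonoid.normalizationMonoid.toNormalizationMonoid
  have hp : p.Prime := Fact.out
  set φ : ZMod p →+* K := ZMod.castHom (dvd_refl p) K with hφ
  -- pick `t` outside the prime field
  obtain ⟨t, ht⟩ : ∃ t : K, t ∉ Set.range φ := by
    obtain ⟨t, ht⟩ := ((Set.finite_range φ).infinite_compl).nonempty
    exact ⟨t, ht⟩
  have ht0 : t ≠ 0 := fun h => ht ⟨0, by simp [h]⟩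
  -- the coset `x + (X²(X-1))`
  set x : K[X] := 1 + X + C (t - 2) * X ^ 2 with hxdef
  set gI : K[X] := X ^ 2 * (X - C 1) with hgIdef
  have hx0 : x ≠ 0 := by
    intro h
    have := congrArg (eval 0) h
    simp [hxdef] at this
  have hgI0 : gI ≠ 0 :=
    mul_ne_zero (pow_ne_zero _ X_ne_zero) (X_sub_C_ne_zero 1)
  have hx1 : eval 1 x = t := by simp [hxdef]; ring
  have hxX : IsCoprime x (X : K[X]) := ⟨1, -(1 + C (t - 2) * X), by rw [hxdef]; ring⟩
  have hxX1 : IsCoprime x (X - C 1) := by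
    have hdvd : (X - C 1) ∣ (x - C t) :=
      dvd_iff_isRoot.mpr (by simp [IsRoot, hx1])
    obtain ⟨s, hs⟩ := hdvd
    refine ⟨C t⁻¹, -(C t⁻¹ * s), ?_⟩
    have hx' : x = C t + (X - C 1) * s := by rw [← hs]; ring
    calc C t⁻¹ * x + -(C t⁻¹ * s) * (X - C 1) = C t⁻¹ * C t := by rw [hx']; ring
      _ = 1 := by rw [← C_mul, inv_mul_cancel₀ ht0, C_1]
  have hcop : IsCoprime x gI := (hxX.pow_right).mul_right hxX1
  have hsup : Ideal.span {x} ⊔ Ideal.span {gI} = ⊤ :=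
    (Ideal.sup_eq_top_iff_isCoprime x gI).mpr hcop
  set S : Set (GolombSpace K[X]) :=
    {y : GolombSpace K[X] | ∃ i ∈ Ideal.span {gI}, (y : K[X]) = x + i} with hSdef
  have hSopen : IsOpen S :=
    TopologicalSpace.isOpen_generateFrom_of_mem
      ⟨x, Ideal.span {gI}, hx0, by simpa [Ideal.span_singleton_eq_bot] using hgI0, hsup, rfl⟩
  have hSne : S.Nonempty := ⟨⟨x, hx0⟩, 0, Ideal.zero_mem _, by simp⟩
  obtain ⟨y, hyS, hyG⟩ := dense_iff_inter_open.mp hdense S hSopen hSne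
  -- the three evaluation conditions
  obtain ⟨i, hi, hyi⟩ := hyS
  obtain ⟨h, rfl⟩ := Ideal.mem_span_singleton.mp hi
  set f : K[X] := (y : K[X]) with hfdef
  have E0 : eval 0 f = 1 := by rw [hyi, hgIdef, hxdef]; simp
  have E1 : eval 1 f = t := by rw [hyi, hgIdef, hxdef]; simp; ring
  have ED : eval 0 (derivative f) = 1 := by
    rw [hyi, hgIdef, hxdef]
    simp [derivative_mul, derivative_pow]
  -- the factorization
  obtain ⟨u, r, n, hu, hirr, hn, hfeq⟩ := myFactor f y.2 hyG
  obtain ⟨u₀, hu₀unit, hu₀⟩ := Polynomial.isUnit_iff.mp hu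
  have hu₀0 : u₀ ≠ 0 := hu₀unit.ne_zero
  -- separable contraction
  obtain ⟨g, hgsep, e, hge⟩ := hirr.hasSeparableContraction p
  have hgirr : Irreducible g :=
    of_irreducible_expand (pow_ne_zero e hp.ne_zero) (by rwa [hge])
  have hdeg1 : g.degree = 1 := IsSepClosed.degree_eq_one_of_irreducible K hgirr hgsep
  set a := g.leadingCoeff with hadef
  set c := g.coeff 0 with hcdef
  have ha : a ≠ 0 := by
    rw [hadef]
    exact leadingCoeff_ne_zero.mpr (fun h0 => by simp [h0] at hdeg1)
  have hgform : g = C a * X + C c := eq_X_add_C_of_degree_eq_one hdeg1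
  set m := p ^ e with hmdef
  have hm0 : m ≠ 0 := pow_ne_zero e hp.ne_zero
  have hr : r = C a * X ^ m + C c := by
    rw [← hge, hgform]; simp
  have hf2 : f = C u₀ * (C a * X ^ m + C c) ^ n := by
    rw [hfeq, ← hu₀, hr]
  -- combine
  have hE0 : u₀ * c ^ n = 1 := by
    rw [hf2] at E0; simpa [zero_pow hm0] using E0
  have hE1 : u₀ * (a + c) ^ n = t := by
    rw [hf2] at E1; simpa using E1
  have hED : u₀ * ((n : K) * c ^ (n - 1) * (a * ((m : K) * (0 : K) ^ (m - 1)))) = 1 := by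
    rw [hf2] at ED
    rw [derivative_C_mul, derivative_pow] at ED
    have hdr : derivative (C a * X ^ m + C c) = C a * (C (m : K) * X ^ (m - 1)) := by
      simp [derivative_X_pow]
    rw [hdr] at ED
    simpa [zero_pow hm0] using ED
  -- case on e
  rcases Nat.eq_zero_or_pos e with he | he
  · -- e = 0 : r = C a * X + C c
    have hm1 : m = 1 := by rw [hmdef, he, pow_zero]
    rw [hm1] at hED
    simp at hED
    -- hED : u₀ * ((n:K) * c^(n-1) * a) = 1
    set ν : K := (n : K) with hν
    have hc0 : c ≠ 0 := by
      intro h0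
      rw [h0, zero_pow (by omega : n ≠ 0)] at hE0
      simp at hE0
    have hν0 : ν ≠ 0 := by
      intro h0
      rw [h0] at hED
      simp at hED
    have hpow : c ^ (n - 1) * c = c ^ n := by
      rw [← pow_succ, Nat.sub_add_cancel hn]
    have hca : c = ν * a := by
      calc c = (u₀ * (ν * c ^ (n - 1) * a)) * c := by rw [hED]; ring
        _ = ν * a * (u₀ * (c ^ (n - 1) * c)) := by ring
        _ = ν * a * (u₀ * c ^ n) := by rw [hpow]
        _ = ν * a := by rw [hE0, mul_one]
    have hb : a + c = a * (1 + ν) := by rw [hca]; ring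
    have h1' : u₀ * (ν ^ n * a ^ n) = 1 := by
      rw [← mul_pow, ← hca]; exact hE0
    have h2' : t = u₀ * (a ^ n * (1 + ν) ^ n) := by
      rw [← hE1, hb, mul_pow]
    have hkey : t * ν ^ n = (1 + ν) ^ n := by
      rw [h2']; linear_combination (1 + ν) ^ n * h1'
    have hres : t = ((1 + ν) * ν⁻¹) ^ n := by
      rw [mul_pow, inv_pow, ← hkey, mul_inv_cancel_right₀ (pow_ne_zero n hν0)]
    apply ht
    refine ⟨((1 + (n : ZMod p)) * (n : ZMod p)⁻¹) ^ n, ?_⟩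
    rw [map_pow, map_mul, map_add, map_one, map_inv₀, map_natCast]
    exact hres.symm
  · -- e ≥ 1 : the derivative vanishes
    have hmK : ((m : ℕ) : K) = 0 := by
      rw [hmdef, Nat.cast_pow, CharP.cast_eq_zero K p, zero_pow (by omega : e ≠ 0)]
    rw [hmK] at hED
    simp at hED

end
end

section
/- Let K be a field of characteristic p > 0 that is algebraic over its prime field 𝔽_p. Then: (i) for every n ≥ 1 the subspace G_n(K[X]) of the Golomb space G(K[X]) has no isolated points; and (ii) for all integers n ≥ m ≥ 0, the set G_m(K[X]) is contained in the closure of G_n(K[X]) in G(K[X]). -/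
open Polynomial Filter

noncomputable section

section Tors
variable {K : Type*} [Field K] {p : ℕ} [Fact p.Prime] [CharP K p] [Algebra (ZMod p) K]

lemma tors_aux (halg : Algebra.IsAlgebraic (ZMod p) K) (g a : K[X]) (hg : g ≠ 0)
    (h : IsCoprime a g) : ∃ k : ℕ, 1 ≤ k ∧ g ∣ a ^ k - 1 := by
  haveI := halg
  let A := AdjoinRoot g
  haveI : Module.Finite K A := (AdjoinRoot.powerBasis hg).finite
  set α : A := AdjoinRoot.mk g a with hα
  have hunit : IsUnit α := by
    obtain ⟨u, v, huv⟩ := h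
    refine IsUnit.of_mul_eq_one (AdjoinRoot.mk g u) ?_
    have := congrArg (AdjoinRoot.mk g) huv
    simp only [map_add, map_mul, AdjoinRoot.mk_self, mul_zero, add_zero, map_one] at this
    rw [mul_comm] at this
    exact this
  haveI : Algebra.IsIntegral (ZMod p) K := Algebra.IsAlgebraic.isIntegral
  have hint : IsIntegral (ZMod p) α :=
    isIntegral_trans α (Algebra.IsIntegral.isIntegral (R := K) α)
  have hfg : (Subalgebra.toSubmodule (Algebra.adjoin (ZMod p) {α})).FG :=
    hint.fg_adjoin_singleton
  haveI : Module.Finite (ZMod p)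
      (Subalgebra.toSubmodule (Algebra.adjoin (ZMod p) {α})) :=
    Module.Finite.iff_fg.mpr hfg
  haveI : Finite (Subalgebra.toSubmodule (Algebra.adjoin (ZMod p) {α})) :=
    Module.finite_of_finite (ZMod p)
  have hmem : ∀ n : ℕ, α ^ n ∈ Subalgebra.toSubmodule (Algebra.adjoin (ZMod p) {α}) :=
    fun n => Subalgebra.pow_mem _ (Algebra.self_mem_adjoin_singleton _ _) n
  obtain ⟨i, j, hij, hpow⟩ := Finite.exists_ne_map_eq_of_infinite
    (fun n : ℕ => (⟨α ^ n, hmem n⟩ : Subalgebra.toSubmodule (Algebra.adjoin (ZMod p) {α})))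
  have hpow' : α ^ i = α ^ j := congrArg Subtype.val hpow
  have key : ∀ i j : ℕ, i < j → α ^ i = α ^ j → ∃ k, 1 ≤ k ∧ α ^ k = 1 := by
    intro i j hlt he
    refine ⟨j - i, by omega, ?_⟩
    have h1 : α ^ i * α ^ (j - i) = α ^ i * 1 := by
      have hij' : i + (j - i) = j := by omega
      rw [mul_one, ← pow_add, hij', ← he]
    exact ((hunit.pow i).mul_left_cancel h1)
  have hkk : ∃ k, 1 ≤ k ∧ α ^ k = 1 := by
    rcases hij.lt_or_gt with h | h
    · exact key i j h hpow'
    · exact key j i h hpow'.symm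
  obtain ⟨k, hk1, hk⟩ := hkk
  refine ⟨k, hk1, ?_⟩
  rw [← AdjoinRoot.mk_eq_zero]
  simp only [map_sub, map_pow, map_one]
  rw [← hα, hk, sub_self]

end Tors

lemma exists_irred {K : Type*} [Field K] (f : K[X]) (hf : f ≠ 0) :
    ∃ π : K[X], Irreducible π ∧ ¬ π ∣ f := by
  set q : K[X] := f * X + 1 with hq
  have hd : (1 : K[X]).degree < (f * X).degree := by
    rw [Polynomial.degree_one, Polynomial.degree_mul, Polynomial.degree_X]
    have h0 : (0 : WithBot ℕ) ≤ f.degree := Polynomial.zero_le_degree_iff.mpr hf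
    calc (0 : WithBot ℕ) < 0 + 1 := by norm_num
    _ ≤ f.degree + 1 := by exact add_le_add_left h0 1
  have hdq : q.degree = (f * X).degree := by
    rw [hq, add_comm]
    exact Polynomial.degree_add_eq_right_of_degree_lt hd
  have hq0 : q ≠ 0 := by
    intro h
    rw [h, Polynomial.degree_zero] at hdq
    rw [← hdq] at hd
    exact not_lt_bot hd
  have hqu : ¬ IsUnit q := by
    intro hu
    have := Polynomial.degree_eq_zero_of_isUnit hu
    rw [hdq] at this
    rw [this] at hd
    exact absurd hd (by simp [Polynomial.degree_one])
  obtain ⟨π, hπ, hπq⟩ := WfDvdMonoid.exists_irreducible_factor hqu hq0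
  refine ⟨π, hπ, fun hπf => ?_⟩
  have h1 : π ∣ 1 := by
    have : π ∣ f * X := hπf.mul_right X
    have h2 : (1 : K[X]) = q - f * X := by rw [hq]; ring
    rw [h2]
    exact dvd_sub hπq this
  exact hπ.not_isUnit (isUnit_of_dvd_one h1)

lemma golomb_opens {R : Type*} [CommRing R] [IsDomain R] (x : GolombSpace R)
    (U : Set (GolombSpace R)) (hU : IsOpen U) (hx : x ∈ U) :
    ∃ g : R, g ≠ 0 ∧ IsCoprime (x : R) g ∧
      {y : GolombSpace R | g ∣ (y : R) - (x : R)} ⊆ U := by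
  have hU' : TopologicalSpace.GenerateOpen
      {S : Set (GolombSpace R) | ∃ (a : R) (I : Ideal R), a ≠ 0 ∧ I ≠ ⊥ ∧
        Ideal.span {a} ⊔ I = ⊤ ∧ S = {y : GolombSpace R | ∃ i ∈ I, (y : R) = a + i}} U := hU
  clear hU
  induction hU' with
  | basic S hS =>
    obtain ⟨a, I, ha, hI, hsup, rfl⟩ := hS
    obtain ⟨i₀, hi₀, hxi⟩ := hx
    have h1 : (1 : R) ∈ Ideal.span {a} ⊔ I := by rw [hsup]; exact Submodule.mem_top
    obtain ⟨s, hs, i, hi, hsi⟩ := Submodule.mem_sup.mp h1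
    obtain ⟨c, rfl⟩ := Ideal.mem_span_singleton'.mp hs
    have key : ∀ g : R, g ∈ I → g ≠ 0 → IsCoprime (x : R) g →
        ∃ g : R, g ≠ 0 ∧ IsCoprime (x : R) g ∧
          {y : GolombSpace R | g ∣ (y : R) - (x : R)} ⊆
            {y : GolombSpace R | ∃ i ∈ I, (y : R) = a + i} := by
      intro g hgI hg0 hgc
      refine ⟨g, hg0, hgc, fun y hy => ?_⟩
      obtain ⟨d, hd⟩ := hy
      refine ⟨(y : R) - a, ?_, by ring⟩
      have : (y : R) - a = g * d + i₀ := by rw [← hd, hxi]; ring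
      rw [this]
      exact add_mem (Ideal.mul_mem_right d I hgI) hi₀
    by_cases hj : i - c * i₀ = 0
    · have hcx : c * (x : R) = 1 := by
        have hi0 : i = c * i₀ := sub_eq_zero.mp hj
        calc c * (x : R) = c * a + i := by rw [hxi, hi0]; ring
        _ = 1 := hsi
      obtain ⟨g, hgI, hg0⟩ := Submodule.exists_mem_ne_zero_of_ne_bot hI
      exact key g hgI hg0 ⟨c, 0, by rw [zero_mul, add_zero]; exact hcx⟩
    · refine key (i - c * i₀) (sub_mem hi (Ideal.mul_mem_left I c hi₀)) hj
        ⟨c, 1, ?_⟩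
      calc c * (x : R) + 1 * (i - c * i₀) = c * a + i := by rw [hxi]; ring
      _ = 1 := hsi
  | univ => exact ⟨1, one_ne_zero, isCoprime_one_right, fun y _ => trivial⟩
  | inter U V hUo hVo ihU ihV =>
    obtain ⟨g₁, h10, h1c, h1s⟩ := ihU hx.1
    obtain ⟨g₂, h20, h2c, h2s⟩ := ihV hx.2
    exact ⟨g₁ * g₂, mul_ne_zero h10 h20, h1c.mul_right h2c, fun y hy =>
      ⟨h1s ((dvd_mul_right g₁ g₂).trans hy), h2s ((dvd_mul_left g₂ g₁).trans hy)⟩⟩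
  | sUnion 𝒮 hS ih =>
    obtain ⟨S, hSmem, hxS⟩ := hx
    obtain ⟨g, hg0, hgc, hgs⟩ := ih S hSmem hxS
    exact ⟨g, hg0, hgc, hgs.trans (Set.subset_sUnion_of_mem hSmem)⟩


section Step
variable {K : Type*} [Field K] {p : ℕ} [Fact p.Prime] [CharP K p] [Algebra (ZMod p) K]

set_option linter.unusedSectionVars false

lemma golomb_step (halg : Algebra.IsAlgebraic (ZMod p) K) (x : K[X]) (hx : x ≠ 0)
    (Δ : Finset (Ideal K[X])) (hmax : ∀ P ∈ Δ, P.IsMaximal)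
    (hΔ : ∀ P : Ideal K[X], P.IsMaximal → (x ∈ P ↔ P ∈ Δ))
    (g : K[X]) (hg : g ≠ 0) (hcop : IsCoprime x g) :
    ∃ (y : K[X]) (Δ' : Finset (Ideal K[X])), y ≠ 0 ∧ Δ'.card = Δ.card + 1 ∧
      (∀ P ∈ Δ', P.IsMaximal) ∧ (∀ P : Ideal K[X], P.IsMaximal → (y ∈ P ↔ P ∈ Δ')) ∧
      IsCoprime y g ∧ g ∣ y - x := by
  classical
  obtain ⟨π, hπ, hπd⟩ := exists_irred (x * g) (mul_ne_zero hx hg)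
  have hπx : ¬ π ∣ x := fun h => hπd (h.mul_right g)
  have hπg : ¬ π ∣ g := fun h => hπd (h.mul_left x)
  have hπcop : IsCoprime π g := hπ.coprime_iff_not_dvd.mpr hπg
  obtain ⟨k, hk1, hkdvd⟩ := tors_aux halg g π hg hπcop
  have hspan_max : (Ideal.span {π}).IsMaximal :=
    PrincipalIdealRing.isMaximal_of_irreducible hπ
  have hnm : Ideal.span {π} ∉ Δ := fun hmem =>
    hπx (Ideal.mem_span_singleton.mp ((hΔ _ hspan_max).mpr hmem))
  refine ⟨x * π ^ k, insert (Ideal.span {π}) Δ,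
    mul_ne_zero hx (pow_ne_zero k hπ.ne_zero), ?_, ?_, ?_, ?_, ?_⟩
  · rw [Finset.card_insert_of_notMem hnm]
  · intro P hP
    rcases Finset.mem_insert.mp hP with h | h
    · rw [h]; exact hspan_max
    · exact hmax P h
  · intro P hPmax
    haveI hPr := hPmax.isPrime
    constructor
    · intro hyP
      rcases hPr.mul_mem_iff_mem_or_mem.mp hyP with h | h
      · exact Finset.mem_insert_of_mem ((hΔ P hPmax).mp h)
      · have hπP : π ∈ P := (hPr.pow_mem_iff_mem k (by omega)).mp h
        have hle : Ideal.span {π} ≤ P :=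
          Ideal.span_le.mpr (Set.singleton_subset_iff.mpr hπP)
        exact Finset.mem_insert.mpr (Or.inl (hspan_max.eq_of_le hPmax.ne_top hle).symm)
    · intro hP
      rcases Finset.mem_insert.mp hP with h | h
      · rw [h]
        exact Ideal.mul_mem_left _ x
          (Ideal.pow_mem_of_mem _ (Ideal.mem_span_singleton_self π) k (by omega))
      · exact Ideal.mul_mem_right _ _ ((hΔ P hPmax).mpr h)
  · exact hcop.mul_left (hπcop.pow_left)
  · have : g ∣ x * (π ^ k - 1) := Dvd.dvd.mul_left hkdvd x
    have he : x * π ^ k - x = x * (π ^ k - 1) := by ring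
    rw [he]
    exact this

lemma golomb_build (halg : Algebra.IsAlgebraic (ZMod p) K) (d : ℕ) :
    ∀ (x : K[X]), x ≠ 0 → ∀ (Δ : Finset (Ideal K[X])), (∀ P ∈ Δ, P.IsMaximal) →
    (∀ P : Ideal K[X], P.IsMaximal → (x ∈ P ↔ P ∈ Δ)) →
    ∀ g : K[X], g ≠ 0 → IsCoprime x g →
    ∃ (y : K[X]) (Δ' : Finset (Ideal K[X])), y ≠ 0 ∧ Δ'.card = Δ.card + d ∧
      (∀ P ∈ Δ', P.IsMaximal) ∧ (∀ P : Ideal K[X], P.IsMaximal → (y ∈ P ↔ P ∈ Δ')) ∧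
      IsCoprime y g ∧ g ∣ y - x := by
  induction d with
  | zero =>
    intro x hx Δ hmax hΔ g hg hcop
    exact ⟨x, Δ, hx, by omega, hmax, hΔ, hcop, by simp⟩
  | succ d ih =>
    intro x hx Δ hmax hΔ g hg hcop
    obtain ⟨y, Δ', hy0, hcard, hmax', hΔ', hcop', hdvd⟩ :=
      ih x hx Δ hmax hΔ g hg hcop
    obtain ⟨z, Δ'', hz0, hcard', hmax'', hΔ'', hcop'', hdvd'⟩ :=
      golomb_step halg y hy0 Δ' hmax' hΔ' g hg hcop'
    refine ⟨z, Δ'', hz0, by omega, hmax'', hΔ'', hcop'', ?_⟩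
    have : z - x = (z - y) + (y - x) := by ring
    rw [this]
    exact dvd_add hdvd' hdvd

lemma golomb_step_same (halg : Algebra.IsAlgebraic (ZMod p) K) (x : K[X]) (hx : x ≠ 0)
    (Δ : Finset (Ideal K[X])) (hmax : ∀ P ∈ Δ, P.IsMaximal)
    (hΔ : ∀ P : Ideal K[X], P.IsMaximal → (x ∈ P ↔ P ∈ Δ)) (hne : Δ.Nonempty)
    (g : K[X]) (hg : g ≠ 0) (hcop : IsCoprime x g) :
    ∃ y : K[X], y ≠ 0 ∧ y ≠ x ∧
      (∀ P : Ideal K[X], P.IsMaximal → (y ∈ P ↔ P ∈ Δ)) ∧ g ∣ y - x := by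
  obtain ⟨P, hP⟩ := hne
  have hPmax := hmax P hP
  have hxP : x ∈ P := (hΔ P hPmax).mpr hP
  set π : K[X] := Submodule.IsPrincipal.generator P with hπdef
  have hPspan : Ideal.span {π} = P := Ideal.span_singleton_generator P
  have hπx : π ∣ x := by
    rw [← Ideal.mem_span_singleton, hPspan]; exact hxP
  have hπ0 : π ≠ 0 := fun h => hx (by simpa [h] using hπx)
  have hπu : ¬ IsUnit π := by
    intro hu
    exact hPmax.ne_top (by rw [← hPspan]; exact Ideal.span_singleton_eq_top.mpr hu)
  have hπcop : IsCoprime π g := hcop.of_isCoprime_of_dvd_left hπx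
  obtain ⟨k, hk1, hkdvd⟩ := tors_aux halg g π hg hπcop
  refine ⟨x * π ^ k, mul_ne_zero hx (pow_ne_zero k hπ0), ?_, ?_, ?_⟩
  · intro h
    have h1 : x * π ^ k = x * 1 := by rw [h, mul_one]
    have h2 : π ^ k = 1 := mul_left_cancel₀ hx h1
    have : IsUnit π := by
      refine IsUnit.of_mul_eq_one (a := π) (π ^ (k - 1)) ?_
      rw [← pow_succ']
      rw [show k - 1 + 1 = k by omega]
      exact h2
    exact hπu this
  · intro Q hQmax
    haveI hQr := hQmax.isPrime
    rw [← hΔ Q hQmax]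
    constructor
    · intro hyQ
      rcases hQr.mul_mem_iff_mem_or_mem.mp hyQ with h | h
      · exact h
      · have hπQ : π ∈ Q := (hQr.pow_mem_iff_mem k (by omega)).mp h
        obtain ⟨c, rfl⟩ := hπx
        exact Ideal.mul_mem_right c Q hπQ
    · intro hxQ
      exact Ideal.mul_mem_right _ _ hxQ
  · have : g ∣ x * (π ^ k - 1) := Dvd.dvd.mul_left hkdvd x
    have he : x * π ^ k - x = x * (π ^ k - 1) := by ring
    rw [he]
    exact this

end Step


open Topology in
/-- Let `K` be a field of characteristic `p > 0` that is algebraic over its prime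
field `𝔽_p`. Then (i) for every `n ≥ 1` the subspace `G_n(K[X])` of the Golomb space
`G(K[X])` has no isolated points, and (ii) for all `n ≥ m ≥ 0`, `G_m(K[X])` is contained in
the closure of `G_n(K[X])` in `G(K[X])`. -/
theorem golombGn_of_algebraic_over_Fp (K : Type*) [Field K] (p : ℕ) [Fact p.Prime]
    [CharP K p] [Algebra (ZMod p) K] (halg : Algebra.IsAlgebraic (ZMod p) K) :
    (∀ n : ℕ, 1 ≤ n → ∀ x : (golombGn (Polynomial K) n), (𝓝[≠] x).NeBot) ∧
      (∀ m n : ℕ, m ≤ n →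
        golombGn (Polynomial K) m ⊆ closure (golombGn (Polynomial K) n)) := by
  constructor
  · -- no isolated points in G_n for n ≥ 1
    intro n hn x
    refine Filter.forall_mem_nonempty_iff_neBot.mp ?_
    intro s hs
    rw [mem_nhdsWithin] at hs
    obtain ⟨u, huo, hxu, hsub⟩ := hs
    rw [isOpen_induced_iff] at huo
    obtain ⟨v, hvo, rfl⟩ := huo
    obtain ⟨g, hg0, hgc, hgs⟩ := golomb_opens (x : GolombSpace (Polynomial K)) v hvo hxu
    obtain ⟨Δ, hcard, hmax, hΔ⟩ := x.2
    have hne : Δ.Nonempty := Finset.card_pos.mp (by omega)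
    obtain ⟨y, hy0, hyne, hymem, hydvd⟩ :=
      golomb_step_same halg ((x : GolombSpace (Polynomial K)) : Polynomial K)
        (x : GolombSpace (Polynomial K)).2 Δ hmax hΔ hne g hg0 hgc
    have hYG : (⟨y, hy0⟩ : GolombSpace (Polynomial K)) ∈ golombGn (Polynomial K) n :=
      ⟨Δ, hcard, hmax, hymem⟩
    refine ⟨⟨⟨y, hy0⟩, hYG⟩, hsub ⟨hgs hydvd, ?_⟩⟩
    intro h
    exact hyne (congrArg (fun z : (golombGn (Polynomial K) n) =>
      ((z : GolombSpace (Polynomial K)) : Polynomial K)) h)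
  · -- G_m ⊆ closure G_n for m ≤ n
    intro m n hmn x hxm
    obtain ⟨Δ, hcard, hmax, hΔ⟩ := hxm
    rw [mem_closure_iff]
    intro o ho hxo
    obtain ⟨g, hg0, hgc, hgs⟩ := golomb_opens x o ho hxo
    obtain ⟨y, Δ', hy0, hcard', hmax', hΔ', hcop', hdvd⟩ :=
      golomb_build halg (n - m) (x : Polynomial K) x.2 Δ hmax hΔ g hg0 hgc
    exact ⟨⟨y, hy0⟩, hgs hdvd, Δ', by omega, hmax', hΔ'⟩

end
end

section
/- Let K be a field of characteristic p > 0 with algebraic closure K̄, let r and q be coprime irreducible polynomials in K[X], let E = (sₙ) with sₙ = uₙ·r^{eₙ} (uₙ ∈ K ∖ {0}, eₙ ≥ 1) be an r-sequence, and let s ∈ K ∖ {0}. Then E converges to s in the (q)-topology on K[X] ∖ (q) if and only if v_p(eₙ) → ∞ as n → ∞ and, for every root λ of q in K̄, one has sₙ(λ) = s for all sufficiently large n. -/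
open Polynomial Filter

noncomputable section

lemma ptendsto_iff {R : Type*} [CommRing R] (P : Ideal R) (f : ℕ → R) (l : R)
    (hl : l ∉ P) (hf : ∀ n, f n ∉ P) :
    PTendsto P f l ↔ ∀ m : ℕ, 1 ≤ m → ∀ᶠ n in atTop, f n - l ∈ P ^ m := by
  have key : ∀ (hl' : l ∉ P) (hf' : ∀ n, f n ∉ P),
      Tendsto (fun n => (⟨f n, hf' n⟩ : {x : R // x ∉ P})) atTop
        (nhds (⟨l, hl'⟩ : {x : R // x ∉ P})) ↔
      ∀ m : ℕ, 1 ≤ m → ∀ᶠ n in atTop, f n - l ∈ P ^ m := by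
    intro hl' hf'
    rw [show (nhds (⟨l, hl'⟩ : {x : R // x ∉ P})) = _ from
      @TopologicalSpace.nhds_generateFrom _ _ (⟨l, hl'⟩ : {x : R // x ∉ P})]
    simp only [Filter.tendsto_iInf, Filter.tendsto_principal, Set.mem_setOf_eq]
    constructor
    · intro h m hm
      have := h {y : {x : R // x ∉ P} | ∃ b ∈ P ^ m, (y : R) = l + b}
        ⟨⟨0, by simp⟩, ⟨l, m, hl', hm, rfl⟩⟩
      filter_upwards [this] with n hn
      obtain ⟨b, hb, hfb⟩ := hn
      simpa [hfb] using hb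
    · rintro h S ⟨hlS, a, m, haP, hm, rfl⟩
      obtain ⟨b₀, hb₀, hlb₀⟩ := hlS
      filter_upwards [h m hm] with n hn
      refine ⟨f n - l + b₀, add_mem hn hb₀, ?_⟩
      show f n = a + (f n - l + b₀)
      have : l = a + b₀ := hlb₀
      rw [this]; ring
  constructor
  · rintro ⟨hl', hf', ht⟩
    exact (key hl' hf').1 ht
  · intro h
    exact ⟨hl, hf, (key hl hf).2 h⟩

section MasterLemma
variable {L : Type*} [Field L]

lemma rootMultiplicity_pow' {g : L[X]} (hg : g ≠ 0) (a : L) (n : ℕ) :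
    rootMultiplicity a (g ^ n) = n * rootMultiplicity a g := by
  induction n with
  | zero =>
    simp [pow_zero, rootMultiplicity_eq_zero (show ¬(1 : L[X]).IsRoot a by simp [IsRoot])]
  | succ n ih =>
    rw [pow_succ, rootMultiplicity_mul (mul_ne_zero (pow_ne_zero _ hg) hg), ih]; ring

lemma master (p : ℕ) [Fact p.Prime] [CharP L p] [PerfectRing L p] :
    ∀ N c : ℕ, ∀ w : L[X], 1 ≤ c → 0 < w.natDegree → c + w.natDegree ≤ N →
    ∀ (a b lam : L), a ≠ 0 → b ≠ 0 → eval lam w ≠ 0 →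
    ∀ m : ℕ, (X - C lam) ^ m ∣ (C a * w ^ c - C b) →
    m ≤ p ^ (padicValNat p c) * w.natDegree ^ 2 := by
  intro N
  induction N with
  | zero => intro c w hc hw hN; omega
  | succ N ih =>
    intro c w hc hw hN a b lam ha hb hlam m hdvd
    have hp2 : 2 ≤ p := (Fact.out : p.Prime).two_le
    have hwne : w ≠ 0 := fun h => by simp [h] at hw
    have hF : C a * w ^ c - C b ≠ 0 := by
      intro h0
      have h1 : C a * w ^ c = C b := by rwa [sub_eq_zero] at h0
      have h2 : (C a * w ^ c).natDegree = (C b).natDegree := by rw [h1]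
      rw [natDegree_C, natDegree_C_mul ha, natDegree_pow] at h2
      have := Nat.mul_le_mul hc hw.le  -- dummy
      nlinarith
    by_cases hpc : p ∣ c
    · -- c = p * c'
      obtain ⟨c', rfl⟩ := hpc
      have hc' : 1 ≤ c' := Nat.pos_of_ne_zero fun h => by simp [h] at hc
      set a₁ := (frobeniusEquiv L p).symm a with ha₁def
      set b₁ := (frobeniusEquiv L p).symm b with hb₁def
      have ha₁ : a₁ ^ p = a := by
        have := (frobeniusEquiv L p).apply_symm_apply a
        rwa [frobeniusEquiv_apply, frobenius_def] at this
      have hb₁ : b₁ ^ p = b := by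
        have := (frobeniusEquiv L p).apply_symm_apply b
        rwa [frobeniusEquiv_apply, frobenius_def] at this
      set G : L[X] := C a₁ * w ^ c' - C b₁ with hGdef
      have hGp : G ^ p = C a * w ^ (p * c') - C b := by
        rw [hGdef, sub_pow_char, mul_pow, ← C_pow, ← C_pow, ha₁, hb₁, ← pow_mul, mul_comm c' p]
      have hGne : G ≠ 0 := by
        intro h; rw [h, zero_pow (by omega : p ≠ 0)] at hGp
        exact hF hGp.symm
      have hmle : m ≤ rootMultiplicity lam (G ^ p) := by
        rw [le_rootMultiplicity_iff (by rw [hGp]; exact hF)]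
        rwa [hGp]
      rw [rootMultiplicity_pow' hGne] at hmle
      have hj := ih c' w hc' hw (by nlinarith) a₁ b₁ lam
        (fun h => ha (by rw [← ha₁, h, zero_pow (by omega : p ≠ 0)]))
        (fun h => hb (by rw [← hb₁, h, zero_pow (by omega : p ≠ 0)]))
        hlam (rootMultiplicity lam G) (pow_rootMultiplicity_dvd G lam)
      have hval : padicValNat p (p * c') = padicValNat p c' + 1 := by
        rw [padicValNat.mul (by omega) (by omega), padicValNat.self (by omega)]; ring
      calc m ≤ p * rootMultiplicity lam G := hmle
        _ ≤ p * (p ^ padicValNat p c' * w.natDegree ^ 2) := Nat.mul_le_mul_left _ hj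
        _ = p ^ padicValNat p (p * c') * w.natDegree ^ 2 := by rw [hval]; ring
    · by_cases hder : derivative w = 0
      · -- w = h ^ p
        have hw' : w = (Polynomial.contract p w).map ((frobeniusEquiv L p).symm : L →+* L) ^ p := by
          set h := (Polynomial.contract p w).map ((frobeniusEquiv L p).symm : L →+* L) with hh
          have h1 : h.map (frobenius L p) = Polynomial.contract p w := by
            have hcomp : (frobenius L p).comp ((frobeniusEquiv L p).symm : L →+* L) = RingHom.id L := by
              ext x
              exact (frobeniusEquiv L p).apply_symm_apply x
            rw [hh, Polynomial.map_map, hcomp, Polynomial.map_id]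
          calc w = expand L p (Polynomial.contract p w) := (Polynomial.expand_contract p hder (by omega)).symm
            _ = expand L p (h.map (frobenius L p)) := by rw [h1]
            _ = (expand L p h).map (frobenius L p) := (map_expand).symm
            _ = h ^ p := by rw [map_frobenius_expand]
        set h := (Polynomial.contract p w).map ((frobeniusEquiv L p).symm : L →+* L) with hh
        have hdegw : w.natDegree = p * h.natDegree := by rw [hw', natDegree_pow, mul_comm]
        have hdh : 0 < h.natDegree := by
          rcases Nat.eq_zero_or_pos h.natDegree with h0 | h0
          · rw [h0, Nat.mul_zero] at hdegw; omega
          · exact h0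
        have hevalh : eval lam h ≠ 0 := fun h0 => by
          apply hlam
          rw [hw', eval_pow, h0, zero_pow (by omega : p ≠ 0)]
        set a₁ := (frobeniusEquiv L p).symm a with ha₁def
        set b₁ := (frobeniusEquiv L p).symm b with hb₁def
        have ha₁ : a₁ ^ p = a := by
          have := (frobeniusEquiv L p).apply_symm_apply a
          rwa [frobeniusEquiv_apply, frobenius_def] at this
        have hb₁ : b₁ ^ p = b := by
          have := (frobeniusEquiv L p).apply_symm_apply b
          rwa [frobeniusEquiv_apply, frobenius_def] at this
        set G : L[X] := C a₁ * h ^ c - C b₁ with hGdef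
        have hGp : G ^ p = C a * w ^ c - C b := by
          rw [hGdef, sub_pow_char, mul_pow, ← C_pow, ← C_pow, ha₁, hb₁, ← pow_mul,
            mul_comm c p, pow_mul, ← hw']
        have hGne : G ≠ 0 := by
          intro h0; rw [h0, zero_pow (by omega : p ≠ 0)] at hGp
          exact hF hGp.symm
        have hmle : m ≤ rootMultiplicity lam (G ^ p) := by
          rw [le_rootMultiplicity_iff (by rw [hGp]; exact hF)]
          rwa [hGp]
        rw [rootMultiplicity_pow' hGne] at hmle
        have hj := ih c h hc hdh (by nlinarith) a₁ b₁ lam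
          (fun h0 => ha (by rw [← ha₁, h0, zero_pow (by omega : p ≠ 0)]))
          (fun h0 => hb (by rw [← hb₁, h0, zero_pow (by omega : p ≠ 0)]))
          hevalh (rootMultiplicity lam G) (pow_rootMultiplicity_dvd G lam)
        calc m ≤ p * rootMultiplicity lam G := hmle
          _ ≤ p * (p ^ padicValNat p c * h.natDegree ^ 2) := Nat.mul_le_mul_left _ hj
          _ = p ^ padicValNat p c * (p * h.natDegree ^ 2) := by ring
          _ ≤ p ^ padicValNat p c * w.natDegree ^ 2 := by
              refine Nat.mul_le_mul_left _ ?_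
              rw [hdegw, mul_pow]
              have : p ≤ p ^ 2 := by nlinarith
              exact Nat.mul_le_mul_right _ this
      · -- separable-ish base case
        rcases Nat.eq_zero_or_pos m with hm0 | hm1
        · subst hm0; positivity
        have hcL : (c : L) ≠ 0 := by
          rw [Ne, CharP.cast_eq_zero_iff L p c]; exact hpc
        have hderF : derivative (C a * w ^ c - C b) = C (a * (c : L)) * (w ^ (c - 1) * derivative w) := by
          rw [derivative_sub, derivative_C, sub_zero, derivative_C_mul, derivative_pow]
          rw [C_mul]; ring
        have hdvd' : (X - C lam) ^ (m - 1) ∣ C (a * (c : L)) * (w ^ (c - 1) * derivative w) := by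
          rw [← hderF]; exact pow_sub_one_dvd_derivative_of_pow_dvd hdvd
        have hunit : IsUnit (C (a * (c : L))) := isUnit_C.mpr ((mul_ne_zero ha hcL).isUnit)
        have hdvd'' : (X - C lam) ^ (m - 1) ∣ w ^ (c - 1) * derivative w := by
          exact (IsUnit.dvd_mul_left hunit).mp hdvd'
        have hcop : IsCoprime ((X - C lam) ^ (m - 1)) (w ^ (c - 1)) := by
          refine IsCoprime.pow ?_
          rw [(irreducible_X_sub_C lam).coprime_iff_not_dvd]
          rw [dvd_iff_isRoot]
          exact hlam
        have hdvdw' : (X - C lam) ^ (m - 1) ∣ derivative w :=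
          hcop.dvd_of_dvd_mul_left hdvd''
        have hle : m - 1 ≤ (derivative w).natDegree := by
          have := natDegree_le_of_dvd hdvdw' hder
          rwa [natDegree_pow, natDegree_X_sub_C, mul_one] at this
        have hlt : (derivative w).natDegree < w.natDegree := natDegree_derivative_lt hw.ne'
        have : m ≤ w.natDegree := by omega
        calc m ≤ w.natDegree := this
          _ ≤ p ^ padicValNat p c * w.natDegree ^ 2 := by
              nlinarith [Nat.one_le_two_pow (n := padicValNat p c),
                pow_pos (by omega : 0 < p) (padicValNat p c)]

end MasterLemma

lemma lemA {K : Type*} [Field K] (p : ℕ) [Fact p.Prime] [CharP K p]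
    (q : K[X]) (hqd : 0 < q.natDegree) (r : K[X]) (u s : K)
    (e m t : ℕ) (hdvd : q ∣ C u * r ^ e - C s) (hpt : p ^ t ∣ e)
    (hbound : m * q.natDegree ≤ p ^ t) :
    q ^ m ∣ C u * r ^ e - C s := by
  classical
  set L := AlgebraicClosure K
  haveI : CharP L p := charP_of_injective_algebraMap (algebraMap K L).injective p
  set φ := algebraMap K L with hφ
  rw [← map_dvd_map' φ]
  rw [Polynomial.map_pow, Polynomial.map_sub, Polynomial.map_mul, Polynomial.map_pow,
    Polynomial.map_C, Polynomial.map_C]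
  set qb := q.map φ with hqb
  set w := r.map φ with hw
  obtain ⟨k, rfl⟩ := hpt
  set a₁ := (iterateFrobeniusEquiv L p t).symm (φ u) with ha₁def
  set b₁ := (iterateFrobeniusEquiv L p t).symm (φ s) with hb₁def
  have ha₁ : a₁ ^ p ^ t = φ u := by
    have := (iterateFrobeniusEquiv L p t).apply_symm_apply (φ u)
    rwa [iterateFrobeniusEquiv_def] at this
  have hb₁ : b₁ ^ p ^ t = φ s := by
    have := (iterateFrobeniusEquiv L p t).apply_symm_apply (φ s)
    rwa [iterateFrobeniusEquiv_def] at this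
  set G : L[X] := C a₁ * w ^ k - C b₁ with hGdef
  have hG : G ^ p ^ t = C (φ u) * w ^ (p ^ t * k) - C (φ s) := by
    rw [hGdef, sub_pow_char_pow, mul_pow, ← C_pow, ← C_pow, ha₁, hb₁, ← pow_mul, mul_comm k (p ^ t)]
  have hqbG : qb ∣ G ^ p ^ t := by
    rw [hG]
    have := Polynomial.map_dvd φ hdvd
    rwa [Polynomial.map_sub, Polynomial.map_mul, Polynomial.map_pow, Polynomial.map_C,
      Polynomial.map_C] at this
  set d := q.natDegree with hd
  have hqbd : qb.natDegree = d := natDegree_map φ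
  have hqbne : qb ≠ 0 := fun h => by simp [h] at hqbd; omega
  have hsplit : qb.Splits := IsAlgClosed.splits qb
  set Pr : L[X] := ∏ lam ∈ qb.roots.toFinset, (X - C lam) with hPr
  have claim2 : Pr ∣ G := by
    refine Finset.prod_dvd_of_coprime
      ((pairwise_coprime_X_sub_C (fun a b h => h)).set_pairwise _) (fun lam hl => ?_)
    refine (prime_X_sub_C lam).dvd_of_dvd_pow (dvd_trans ?_ hqbG)
    exact dvd_iff_isRoot.mpr (isRoot_of_mem_roots (Multiset.mem_toFinset.mp hl))
  have claim1 : qb ∣ Pr ^ d := by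
    have hcard : Multiset.card qb.roots = qb.natDegree := splits_iff_card_roots.mp hsplit
    have e1 : qb = C qb.leadingCoeff * (qb.roots.map fun a => X - C a).prod :=
      hsplit.eq_prod_roots
    have e2 : (qb.roots.map fun a => X - C a).prod
        = ∏ lam ∈ qb.roots.toFinset, (X - C lam) ^ qb.roots.count lam :=
      Finset.prod_multiset_map_count _ _
    have e3 : (∏ lam ∈ qb.roots.toFinset, (X - C lam) ^ qb.roots.count lam)
        ∣ ∏ lam ∈ qb.roots.toFinset, (X - C lam) ^ d := by
      refine Finset.prod_dvd_prod_of_dvd _ _ (fun lam _ => pow_dvd_pow _ ?_)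
      calc qb.roots.count lam ≤ Multiset.card qb.roots := Multiset.count_le_card _ _
        _ = d := by rw [hcard, hqbd]
    have hunit : IsUnit (C qb.leadingCoeff) :=
      isUnit_C.mpr (leadingCoeff_ne_zero.mpr hqbne).isUnit
    calc qb = C qb.leadingCoeff * (qb.roots.map fun a => X - C a).prod := e1
      _ ∣ (qb.roots.map fun a => X - C a).prod := (IsUnit.mul_left_dvd hunit).mpr dvd_rfl
      _ ∣ ∏ lam ∈ qb.roots.toFinset, (X - C lam) ^ d := by rw [e2]; exact e3
      _ = Pr ^ d := by rw [hPr, ← Finset.prod_pow]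
  calc qb ^ m ∣ (Pr ^ d) ^ m := pow_dvd_pow_of_dvd claim1 m
    _ = Pr ^ (d * m) := by rw [← pow_mul]
    _ ∣ Pr ^ (p ^ t) := pow_dvd_pow _ (by rw [mul_comm]; exact hbound)
    _ ∣ G ^ (p ^ t) := pow_dvd_pow_of_dvd claim2 _
    _ = _ := hG

lemma lemB {K : Type*} [Field K] (p : ℕ) [Fact p.Prime] [CharP K p]
    (q r : K[X]) (hq : Irreducible q) (hr : Irreducible r) (hrq : IsCoprime r q)
    (u s : K) (hu : u ≠ 0) (hs : s ≠ 0) (e m : ℕ) (he : 1 ≤ e)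
    (hdvd : q ^ m ∣ C u * r ^ e - C s) :
    m ≤ p ^ padicValNat p e * r.natDegree ^ 2 := by
  set L := AlgebraicClosure K
  haveI : CharP L p := charP_of_injective_algebraMap (algebraMap K L).injective p
  set φ := algebraMap K L with hφ
  have hqd : 0 < q.natDegree := hq.natDegree_pos
  have hrd : 0 < r.natDegree := hr.natDegree_pos
  set qb := q.map φ with hqb
  have hqbd : qb.natDegree = q.natDegree := natDegree_map φ
  have hrbd : (r.map φ).natDegree = r.natDegree := natDegree_map φ
  have hqbne : qb ≠ 0 := fun h => by simp [h] at hqbd; omega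
  have hdeg : qb.degree ≠ 0 := by
    rw [degree_eq_natDegree hqbne, hqbd]
    simp only [Ne, Nat.cast_eq_zero]
    omega
  obtain ⟨lam, hlam⟩ := IsAlgClosed.exists_root qb hdeg
  have h1 : (X - C lam) ∣ qb := dvd_iff_isRoot.mpr hlam
  have h2 : (X - C lam) ^ m ∣ C (φ u) * (r.map φ) ^ e - C (φ s) := by
    have h3 := Polynomial.map_dvd φ hdvd
    rw [Polynomial.map_pow, Polynomial.map_sub, Polynomial.map_mul, Polynomial.map_pow,
      Polynomial.map_C, Polynomial.map_C] at h3
    exact (pow_dvd_pow_of_dvd h1 m).trans h3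
  have hev : eval lam (r.map φ) ≠ 0 := by
    intro h0
    have hdr : (X - C lam) ∣ r.map φ := dvd_iff_isRoot.mpr h0
    have hcop : IsCoprime (r.map φ) qb := by
      have := hrq.map (mapRingHom φ)
      simpa [coe_mapRingHom] using this
    obtain ⟨x, y, hxy⟩ := hcop
    have : (X - C lam) ∣ 1 := by
      rw [← hxy]
      exact dvd_add (Dvd.dvd.mul_left hdr x) (Dvd.dvd.mul_left h1 y)
    have := isUnit_of_dvd_one this
    exact (Polynomial.not_isUnit_X_sub_C lam) this
  have hφu : φ u ≠ 0 := fun h0 => hu (φ.injective (by rw [h0, map_zero]))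
  have hφs : φ s ≠ 0 := fun h0 => hs (φ.injective (by rw [h0, map_zero]))
  have := master p (e + (r.map φ).natDegree) e (r.map φ) he (by rw [hrbd]; exact hrd) le_rfl
    (φ u) (φ s) lam hφu hφs hev m h2
  rwa [hrbd] at this


/-- Let `K` be a field of characteristic `p > 0` with algebraic closure `K̄`,
let `r, q` be coprime irreducible polynomials of `K[X]`, let `E = (sₙ)`, `sₙ = uₙ·r^{eₙ}`
be an `r`-sequence and let `s ∈ K ∖ {0}`. Then `E` converges to `s` in the `(q)`-topology
if and only if `v_p(eₙ) → ∞` and, for every root `λ` of `q` in `K̄`, `sₙ(λ) = s` for all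
sufficiently large `n`. -/
theorem rSequence_tendsto_iff (K : Type*) [Field K] (p : ℕ) [Fact p.Prime] [CharP K p]
    (r q : K[X]) (hr : Irreducible r) (hq : Irreducible q) (hrq : IsCoprime r q)
    (u : ℕ → K) (e : ℕ → ℕ) (hu : ∀ n, u n ≠ 0) (he : ∀ n, 1 ≤ e n)
    (s : K) (hs : s ≠ 0) :
    PTendsto (Ideal.span {q}) (fun n => C (u n) * r ^ e n) (C s) ↔
      (Filter.Tendsto (fun n => padicValNat p (e n)) Filter.atTop Filter.atTop ∧
        ∀ lam : AlgebraicClosure K, aeval lam q = 0 →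
          ∀ᶠ n in Filter.atTop,
            aeval lam (C (u n) * r ^ e n) = algebraMap K (AlgebraicClosure K) s) := by
  classical
  have hqd : 0 < q.natDegree := hq.natDegree_pos
  have hrd : 0 < r.natDegree := hr.natDegree_pos
  have hp2 : 2 ≤ p := (Fact.out : p.Prime).two_le
  set L := AlgebraicClosure K with hL
  set φ := algebraMap K L with hφ
  -- non-membership facts
  have hlP : C s ∉ Ideal.span {q} := by
    rw [Ideal.mem_span_singleton]
    intro hd
    exact hq.not_isUnit (isUnit_of_dvd_unit hd (isUnit_C.mpr hs.isUnit))
  have hqprime : Prime q := hq.prime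
  have hqnr : ¬ q ∣ r := by
    intro hd
    obtain ⟨x, y, hxy⟩ := hrq
    refine hq.not_isUnit (isUnit_of_dvd_one ?_)
    rw [← hxy]
    exact dvd_add (Dvd.dvd.mul_left hd x) (Dvd.dvd.mul_left dvd_rfl y)
  have hfP : ∀ n, C (u n) * r ^ e n ∉ Ideal.span {q} := by
    intro n
    rw [Ideal.mem_span_singleton]
    intro hd
    rcases hqprime.dvd_mul.mp hd with h | h
    · exact hq.not_isUnit (isUnit_of_dvd_unit h (isUnit_C.mpr (hu n).isUnit))
    · exact hqnr (hqprime.dvd_of_dvd_pow h)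
  rw [ptendsto_iff _ _ _ hlP hfP]
  have hmem : ∀ (g : K[X]) (m : ℕ), (g ∈ Ideal.span {q} ^ m ↔ q ^ m ∣ g) := by
    intro g m
    rw [Ideal.span_singleton_pow, Ideal.mem_span_singleton]
  -- the root of q in the algebraic closure
  set qb := q.map φ with hqb
  have hqbd : qb.natDegree = q.natDegree := natDegree_map φ
  have hqbne : qb ≠ 0 := fun h => by simp [h] at hqbd; omega
  have hdeg : qb.degree ≠ 0 := by
    rw [degree_eq_natDegree hqbne, hqbd]
    simp only [Ne, Nat.cast_eq_zero]
    omega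
  obtain ⟨lam₀, hlam₀⟩ := IsAlgClosed.exists_root qb hdeg
  have haev₀ : aeval lam₀ q = 0 := by
    rw [aeval_def, ← eval_map]; exact hlam₀
  constructor
  · intro h
    constructor
    · rw [tendsto_atTop]
      intro T
      have hm := h (p ^ T * r.natDegree ^ 2 + 1) (Nat.succ_le_succ (Nat.zero_le _))
      filter_upwards [hm] with n hn
      rw [hmem] at hn
      have hB := lemB p q r hq hr hrq (u n) s (hu n) hs (e n) _ (he n) hn
      have hD : 0 < r.natDegree ^ 2 := by positivity
      have hlt : p ^ T < p ^ padicValNat p (e n) := by nlinarith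
      exact le_of_lt ((Nat.pow_lt_pow_iff_right (by omega)).mp hlt)
    · intro lam hlamq
      filter_upwards [h 1 le_rfl] with n hn
      rw [hmem, pow_one] at hn
      obtain ⟨c, hc⟩ := hn
      have : aeval lam (C (u n) * r ^ e n - C s) = 0 := by
        rw [hc, map_mul, hlamq, zero_mul]
      rw [map_sub, sub_eq_zero, aeval_C] at this
      exact this
  · rintro ⟨hval, hroot⟩ m hm
    have hev := hroot lam₀ haev₀
    have hv2 : ∀ᶠ n in atTop, m * q.natDegree ≤ padicValNat p (e n) :=
      hval.eventually_ge_atTop _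
    filter_upwards [hev, hv2] with n h1 h2
    rw [hmem]
    -- Step 1 : q divides the difference
    have h3 : aeval lam₀ (C (u n) * r ^ e n - C s) = 0 := by
      rw [map_sub, h1, aeval_C, sub_self]
    have hint : IsIntegral K lam₀ := Algebra.IsIntegral.isIntegral lam₀
    have hmin : minpoly K lam₀ ∣ C (u n) * r ^ e n - C s := minpoly.dvd K lam₀ h3
    have hminq : minpoly K lam₀ ∣ q := minpoly.dvd K lam₀ haev₀
    have hqmin : q ∣ minpoly K lam₀ := by
      obtain ⟨c, hc⟩ := hminq
      rcases hq.isUnit_or_isUnit hc with hcu | hcu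
      · exact absurd hcu (minpoly.not_isUnit K lam₀)
      · obtain ⟨v, rfl⟩ := hcu
        exact ⟨(↑v⁻¹ : K[X]), by rw [hc, mul_assoc, Units.mul_inv, mul_one]⟩
    have hstep1 : q ∣ C (u n) * r ^ e n - C s := hqmin.trans hmin
    -- Step 2 : upgrade to q ^ m
    set t := padicValNat p (e n) with ht
    have hbound : m * q.natDegree < p ^ t := by
      calc m * q.natDegree ≤ t := h2
        _ < 2 ^ t := Nat.lt_two_pow_self
        _ ≤ p ^ t := Nat.pow_le_pow_left (by omega) t
    exact lemA p q hqd r (u n) s (e n) m t hstep1 pow_padicValNat_dvd hbound.le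

end
end

section
/- Let K be a field of characteristic p > 0 with algebraic closure K̄, and let E be a basic X-sequence in K[X]. If 1 ∈ ℓ(E), then ℓ(E) is a multiplicative subgroup of K̄ ∖ {0} all of whose elements have finite order. -/
open Polynomial Filter

noncomputable section

/-- `ℓ(E)` for the `X`-sequence `E = (uₙ·X^{eₙ})`: the set of `λ` in the algebraic closure
`K̄` such that `E` converges to `1` in the `(X − λ)`-topology on `K̄[X] ∖ (X − λ)`. -/
def ellSet (K : Type*) [Field K] (u : ℕ → K) (e : ℕ → ℕ) : Set (AlgebraicClosure K) :=
  {lam | PTendsto (Ideal.span {X - C lam})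
    (fun n => C (algebraMap K (AlgebraicClosure K) (u n)) * X ^ e n) 1}


lemma PTendsto_iff {R : Type*} [CommRing R] (P : Ideal R) (s : ℕ → R) (l : R) :
    PTendsto P s l ↔ l ∉ P ∧ (∀ n, s n ∉ P) ∧
      ∀ m : ℕ, 1 ≤ m → ∀ᶠ n in atTop, s n - l ∈ P ^ m := by
  constructor
  · rintro ⟨hl, hs, ht⟩
    refine ⟨hl, hs, fun m hm => ?_⟩
    have hopen : IsOpen {y : {x : R // x ∉ P} | ∃ b ∈ P ^ m, (y : R) = l + b} :=
      TopologicalSpace.isOpen_generateFrom_of_mem ⟨l, m, hl, hm, rfl⟩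
    have hmem : (⟨l, hl⟩ : {x : R // x ∉ P}) ∈
        {y : {x : R // x ∉ P} | ∃ b ∈ P ^ m, (y : R) = l + b} :=
      ⟨0, zero_mem _, by simp⟩
    filter_upwards [ht.eventually (hopen.mem_nhds hmem)] with n hn
    obtain ⟨b, hb, hbe⟩ := hn
    have : s n - l = b := by rw [hbe]; ring
    rwa [this]
  · rintro ⟨hl, hs, ht⟩
    refine ⟨hl, hs, ?_⟩
    rw [TopologicalSpace.tendsto_nhds_generateFrom_iff]
    rintro S ⟨a, n, ha, hn, rfl⟩ hlS
    obtain ⟨b₀, hb₀, hlb⟩ := hlS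
    filter_upwards [ht n hn] with k hk
    refine ⟨b₀ + (s k - l), add_mem hb₀ hk, ?_⟩
    show s k = a + (b₀ + (s k - l))
    have hlb' : l = a + b₀ := hlb
    rw [hlb']; ring

lemma scale_dvd_transfer {F : Type*} [Field F] (lam : F) (h0 : lam ≠ 0) (e m : ℕ)
    (hle : lam ^ e = 1) (h : (X - 1 : F[X]) ^ m ∣ X ^ e - 1) :
    (X - C lam) ^ m ∣ X ^ e - 1 := by
  have hmap := map_dvd (aeval (R := F) (C lam⁻¹ * X)) h
  simp only [map_pow, map_sub, aeval_X, map_one, aeval_one, mul_pow, ← C_pow, inv_pow] at hmap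
  rw [hle, inv_one, map_one, one_mul] at hmap
  have hdvd : (X - C lam) ∣ (C lam⁻¹ * X - 1) := by
    refine ⟨C lam⁻¹, ?_⟩
    rw [sub_mul, ← C_mul, mul_comm lam, inv_mul_cancel₀ h0, C_1]
    ring
  exact (pow_dvd_pow_of_dvd hdvd m).trans hmap

lemma mem_ellSet_iff {K : Type*} [Field K] (u : ℕ → K) (e : ℕ → ℕ)
    (hu : ∀ n, u n ≠ 0) (he : ∀ n, 1 ≤ e n) (lam : AlgebraicClosure K) :
    lam ∈ ellSet K u e ↔ lam ≠ 0 ∧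
      ∀ m : ℕ, 1 ≤ m → ∀ᶠ n in atTop,
        (X - C lam) ^ m ∣ C (algebraMap K (AlgebraicClosure K) (u n)) * X ^ e n - 1 := by
  have hu' : ∀ n, algebraMap K (AlgebraicClosure K) (u n) ≠ 0 := fun n => by
    simpa using hu n
  rw [ellSet, Set.mem_setOf_eq, PTendsto_iff]
  have h1P : (1 : (AlgebraicClosure K)[X]) ∉ Ideal.span {X - C lam} := by
    rw [Ideal.mem_span_singleton]
    intro hdvd
    exact (Polynomial.not_isUnit_X_sub_C lam) (isUnit_of_dvd_one hdvd)
  have hsP : ∀ n : ℕ,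
      (C (algebraMap K (AlgebraicClosure K) (u n)) * X ^ e n ∉ Ideal.span {X - C lam}) ↔
        lam ≠ 0 := by
    intro n
    rw [Ideal.mem_span_singleton, dvd_iff_isRoot, IsRoot.def]
    simp only [eval_mul, eval_C, eval_pow, eval_X]
    constructor
    · intro h hl0
      exact h (by rw [hl0, zero_pow (Nat.one_le_iff_ne_zero.mp (he n)), mul_zero])
    · intro hl0 hc
      rcases mul_eq_zero.mp hc with h | h
      · exact hu' n h
      · exact hl0 (pow_eq_zero_iff (Nat.one_le_iff_ne_zero.mp (he n)) |>.mp h)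
  have hPm : ∀ (m : ℕ) (f : (AlgebraicClosure K)[X]),
      f ∈ Ideal.span {X - C lam} ^ m ↔ (X - C lam) ^ m ∣ f := by
    intro m f
    rw [Ideal.span_singleton_pow, Ideal.mem_span_singleton]
  constructor
  · rintro ⟨-, hs, ht⟩
    refine ⟨(hsP 0).mp (hs 0), fun m hm => ?_⟩
    filter_upwards [ht m hm] with n hn
    exact (hPm m _).mp hn
  · rintro ⟨hl0, ht⟩
    refine ⟨h1P, fun n => (hsP n).mpr hl0, fun m hm => ?_⟩
    filter_upwards [ht m hm] with n hn
    exact (hPm m _).mpr hn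

/-- Let `K` be a field of characteristic `p > 0` and let `E` be a basic
`X`-sequence in `K[X]`. If `1 ∈ ℓ(E)`, then `ℓ(E)` is a multiplicative subgroup of
`K̄ ∖ {0}` all of whose elements have finite order. -/
theorem ellSet_subgroup (K : Type*) [Field K] (p : ℕ) [Fact p.Prime] [CharP K p]
    (u : ℕ → K) (e : ℕ → ℕ) (hu : ∀ n, u n ≠ 0) (he : ∀ n, 1 ≤ e n)
    (hbasic : PTendsto (Ideal.span {X - 1}) (fun n => C (u n) * X ^ e n) 1)
    (h1 : (1 : AlgebraicClosure K) ∈ ellSet K u e) :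
    (∀ x ∈ ellSet K u e, x ≠ 0) ∧
      (∀ x ∈ ellSet K u e, ∀ y ∈ ellSet K u e, x * y ∈ ellSet K u e) ∧
      (∀ x ∈ ellSet K u e, x⁻¹ ∈ ellSet K u e) ∧
      (∀ x ∈ ellSet K u e, ∃ k : ℕ, 1 ≤ k ∧ x ^ k = 1) := by
  classical
  set Kb := AlgebraicClosure K with hKb
  set u' : ℕ → Kb := fun n => algebraMap K Kb (u n) with hu'def
  have hmem : ∀ lam : Kb, lam ∈ ellSet K u e ↔ lam ≠ 0 ∧
      ∀ m : ℕ, 1 ≤ m → ∀ᶠ n in atTop, (X - C lam) ^ m ∣ C (u' n) * X ^ e n - 1 :=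
    fun lam => mem_ellSet_iff u e hu he lam
  rw [hmem] at h1
  -- eventually the units are 1
  have hu1 : ∀ᶠ n in atTop, u' n = 1 := by
    filter_upwards [h1.2 1 le_rfl] with n hn
    rw [pow_one] at hn
    have hroot : ((C (u' n) * X ^ e n - 1 : Kb[X])).eval 1 = 0 := by
      have := (dvd_iff_isRoot).mp hn
      simpa using this
    simp only [eval_sub, eval_mul, eval_C, eval_pow, eval_X, one_pow, mul_one, eval_one] at hroot
    exact sub_eq_zero.mp hroot
  -- eventually (X-1)^m divides X^{e n} - 1
  have hbase : ∀ m : ℕ, 1 ≤ m → ∀ᶠ n in atTop, (X - 1 : Kb[X]) ^ m ∣ X ^ e n - 1 := by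
    intro m hm
    filter_upwards [h1.2 m hm, hu1] with n hn hn1
    rw [hn1, map_one, one_mul] at hn
    simpa using hn
  -- root condition: members satisfy lam^{e n} = 1 eventually
  have hroot : ∀ lam ∈ ellSet K u e, ∀ᶠ n in atTop, lam ^ e n = 1 := by
    intro lam hl
    rw [hmem] at hl
    filter_upwards [hl.2 1 le_rfl, hu1] with n hn hn1
    rw [hn1, map_one, one_mul, pow_one] at hn
    have := (dvd_iff_isRoot).mp hn
    simp only [IsRoot.def, eval_sub, eval_pow, eval_X, eval_one] at this
    exact sub_eq_zero.mp this
  -- builder: nonzero eventual roots of unity are members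
  have hbuild : ∀ lam : Kb, lam ≠ 0 → (∀ᶠ n in atTop, lam ^ e n = 1) →
      lam ∈ ellSet K u e := by
    intro lam h0 hev
    rw [hmem]
    refine ⟨h0, fun m hm => ?_⟩
    filter_upwards [hbase m hm, hev, hu1] with n hb hl hn1
    rw [hn1, map_one, one_mul]
    exact scale_dvd_transfer lam h0 (e n) m hl hb
  refine ⟨fun x hx => ((hmem x).mp hx).1, ?_, ?_, ?_⟩
  · intro x hx y hy
    refine hbuild _ (mul_ne_zero ((hmem x).mp hx).1 ((hmem y).mp hy).1) ?_
    filter_upwards [hroot x hx, hroot y hy] with n hxn hyn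
    rw [mul_pow, hxn, hyn, mul_one]
  · intro x hx
    refine hbuild _ (inv_ne_zero ((hmem x).mp hx).1) ?_
    filter_upwards [hroot x hx] with n hxn
    rw [inv_pow, hxn, inv_one]
  · intro x hx
    obtain ⟨n, hn⟩ := (hroot x hx).exists
    exact ⟨e n, he n, hn⟩


end
end

section
/- Let K be a field of characteristic p > 0 with algebraic closure K̄, and let H be a multiplicative subgroup of K̄ ∖ {0} all of whose elements have finite order. Then there exists a basic X-sequence E in K[X] such that ℓ(E) = H. -/
open Polynomial Filter

noncomputable section

section AuxLemmas

variable {F : Type*} [Field F] {p : ℕ} [Fact p.Prime] [CharP F p]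

/-- Frobenius injectivity: a `p^k`-th root of unity in characteristic `p` is `1`. -/
lemma eq_one_of_pow_char_pow_eq_one {x : F} {k : ℕ} (h : x ^ p ^ k = 1) : x = 1 := by
  have h0 : (x - 1) ^ p ^ k = 0 := by
    rw [sub_pow_char_pow, h, one_pow, sub_self]
  have := pow_eq_zero_iff (pow_ne_zero k (Fact.out (p := p.Prime)).ne_zero) |>.mp h0
  exact sub_eq_zero.mp this

lemma mem_span_X_sub_C_iff {lam : F} {f : F[X]} :
    f ∈ Ideal.span {X - C lam} ↔ f.eval lam = 0 := by
  rw [Ideal.mem_span_singleton]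
  exact dvd_iff_isRoot

/-- Forward direction: if `lam ^ d n = 1` for all large `n`, then `X ^ (p^n * d n) → 1`
in the `(X - lam)`-topology. -/
lemma ptendsto_of_eventually_pow_eq_one (d : ℕ → ℕ) (lam : F) (hlam0 : lam ≠ 0) (m : ℕ)
    (h : ∀ n, m ≤ n → lam ^ d n = 1) :
    PTendsto (Ideal.span {X - C lam}) (fun n => (X : F[X]) ^ (p ^ n * d n)) 1 := by
  have hp1 : 1 < p := (Fact.out (p := p.Prime)).one_lt
  have hl : (1 : F[X]) ∉ Ideal.span {X - C lam} := by
    rw [mem_span_X_sub_C_iff]; simp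
  have hs : ∀ n, (X : F[X]) ^ (p ^ n * d n) ∉ Ideal.span {X - C lam} := by
    intro n
    rw [mem_span_X_sub_C_iff]
    simp [pow_ne_zero _ hlam0]
  refine ⟨hl, hs, ?_⟩
  refine TopologicalSpace.tendsto_nhds_generateFrom_iff.mpr ?_
  rintro s ⟨a, k, haP, hk, rfl⟩ hmem
  obtain ⟨b0, hb0, hab0⟩ := hmem
  simp only [Set.mem_setOf_eq] at hab0 ⊢
  refine Filter.eventually_atTop.mpr ⟨max m k, fun n hn => ?_⟩
  have hmn : m ≤ n := le_trans (le_max_left _ _) hn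
  have hkn : k ≤ n := le_trans (le_max_right _ _) hn
  have hkpn : k ≤ p ^ n := le_trans hkn (le_of_lt (Nat.lt_pow_self (n := n) hp1))
  have hXd : (X : F[X]) ^ (p ^ n * d n) - 1 ∈ (Ideal.span {X - C lam}) ^ (p ^ n) := by
    rw [Ideal.span_singleton_pow, Ideal.mem_span_singleton]
    have hdvd : (X - C lam) ∣ ((X : F[X]) ^ d n - 1) := by
      rw [dvd_iff_isRoot]
      simp [IsRoot, h n hmn]
    have h2 : ((X : F[X]) ^ d n - 1) ^ p ^ n = (X : F[X]) ^ (p ^ n * d n) - 1 := by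
      rw [sub_pow_char_pow, one_pow, ← pow_mul, mul_comm (d n)]
    calc (X - C lam) ^ p ^ n ∣ ((X : F[X]) ^ d n - 1) ^ p ^ n :=
          pow_dvd_pow_of_dvd hdvd _
      _ = (X : F[X]) ^ (p ^ n * d n) - 1 := h2
  refine ⟨b0 + ((X : F[X]) ^ (p ^ n * d n) - 1), ?_, ?_⟩
  · exact Ideal.add_mem _ hb0 (Ideal.pow_le_pow_right hkpn hXd)
  · linear_combination hab0

/-- Converse direction: if `X ^ (p^n * d n) → 1` in the `(X - lam)`-topology then
`lam ≠ 0` and some `lam ^ d n = 1`. -/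
lemma eventually_pow_eq_one_of_ptendsto (d : ℕ → ℕ) (hd : ∀ n, 1 ≤ d n) (lam : F)
    (h : PTendsto (Ideal.span {X - C lam}) (fun n => (X : F[X]) ^ (p ^ n * d n)) 1) :
    lam ≠ 0 ∧ ∃ n, lam ^ d n = 1 := by
  obtain ⟨hl, hs, ht⟩ := h
  set P := Ideal.span {X - C lam} with hP
  have hlam0 : lam ≠ 0 := by
    intro h0
    apply hs 0
    have he : p ^ 0 * d 0 ≠ 0 :=
      Nat.mul_ne_zero (pow_ne_zero 0 (Fact.out (p := p.Prime)).ne_zero)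
        (Nat.one_le_iff_ne_zero.mp (hd 0))
    rw [mem_span_X_sub_C_iff, h0]
    simp [zero_pow he]
    exact Nat.one_le_iff_ne_zero.mp (hd 0)
  refine ⟨hlam0, ?_⟩
  set S : Set {x : F[X] // x ∉ P} := {y | ∃ b ∈ P ^ 1, (y : F[X]) = 1 + b} with hS
  have hSopen : IsOpen S :=
    TopologicalSpace.GenerateOpen.basic S ⟨1, 1, hl, le_refl 1, rfl⟩
  have hmemS : (⟨1, hl⟩ : {x : F[X] // x ∉ P}) ∈ S := ⟨0, Ideal.zero_mem _, by simp⟩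
  have hev := ht (hSopen.mem_nhds hmemS)
  obtain ⟨N, hN⟩ := Filter.eventually_atTop.mp hev
  obtain ⟨b, hb, hXb⟩ := hN N le_rfl
  rw [pow_one] at hb
  have heval : lam ^ (p ^ N * d N) = 1 := by
    have hXb' : (X : F[X]) ^ (p ^ N * d N) = 1 + b := hXb
    have : ((X : F[X]) ^ (p ^ N * d N) - 1) ∈ P := by
      rw [hXb']; simpa using hb
    rw [hP, mem_span_X_sub_C_iff] at this
    simp only [eval_sub, eval_pow, eval_X, eval_one, sub_eq_zero] at this
    exact this
  refine ⟨N, ?_⟩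
  have hkey : (lam ^ d N) ^ p ^ N = 1 := by
    rw [← pow_mul, mul_comm (d N) (p ^ N)]
    exact heval
  exact eq_one_of_pow_char_pow_eq_one (p := p) hkey

end AuxLemmas

/-- Let `K` be a field of characteristic `p > 0` and let `H` be a torsion
multiplicative subgroup of `K̄ ∖ {0}`. Then there is a basic `X`-sequence `E` in `K[X]`
with `ℓ(E) = H`. -/
theorem exists_basic_XSequence_ellSet_eq (K : Type*) [Field K] (p : ℕ) [Fact p.Prime]
    [CharP K p] (H : Subgroup (AlgebraicClosure K)ˣ) (hH : ∀ x ∈ H, IsOfFinOrder x) :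
    ∃ (u : ℕ → K) (e : ℕ → ℕ), (∀ n, u n ≠ 0) ∧ (∀ n, 1 ≤ e n) ∧
      PTendsto (Ideal.span {X - 1}) (fun n => C (u n) * X ^ e n) 1 ∧
      ellSet K u e = Units.val '' (H : Set (AlgebraicClosure K)ˣ) := by
  classical
  set L := AlgebraicClosure K
  haveI : CharP L p := inferInstance
  have hp0 : p ≠ 0 := (Fact.out (p := p.Prime)).ne_zero
  -- H is countable
  have hcount : (H : Set Lˣ).Countable := by
    have hsub : (H : Set Lˣ) ⊆ ⋃ m : ℕ, {x : Lˣ | x ^ (m + 1) = 1} := by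
      intro x hx
      obtain ⟨k, hk, hk1⟩ := isOfFinOrder_iff_pow_eq_one.mp (hH x hx)
      exact Set.mem_iUnion.mpr ⟨k - 1, by
        simp only [Set.mem_setOf_eq, Nat.sub_add_cancel hk]; exact hk1⟩
    refine Set.Countable.mono hsub (Set.countable_iUnion fun m => Set.Finite.countable ?_)
    have hfin : {y : L | ((X : L[X]) ^ (m + 1) - 1).IsRoot y}.Finite :=
      Polynomial.finite_setOf_isRoot (by
        have := Polynomial.X_pow_sub_C_ne_zero (Nat.succ_pos m) (1 : L)
        rwa [C_1] at this)
    have : {x : Lˣ | x ^ (m + 1) = 1} ⊆ Units.val ⁻¹' {y : L | ((X : L[X]) ^ (m + 1) - 1).IsRoot y} := by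
      intro x hx
      simp only [Set.mem_preimage, Set.mem_setOf_eq, IsRoot, eval_sub, eval_pow, eval_X, eval_one,
        sub_eq_zero]
      have h1 := congrArg Units.val (show x ^ (m + 1) = 1 from hx)
      rwa [Units.val_pow_eq_pow_val, Units.val_one] at h1
    exact Set.Finite.subset (hfin.preimage Units.val_injective.injOn) this
  have hne : (H : Set Lˣ).Nonempty := ⟨1, H.one_mem⟩
  obtain ⟨f, hf⟩ := hcount.exists_eq_range hne
  have hfH : ∀ i, f i ∈ H := fun i => by
    rw [← SetLike.mem_coe, hf]; exact ⟨i, rfl⟩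
  have hford : ∀ i, orderOf (f i) ≠ 0 := fun i => (hH _ (hfH i)).orderOf_pos.ne'
  set d : ℕ → ℕ := fun n => (Finset.range (n + 1)).lcm fun i => orderOf (f i) with hd
  have hd0 : ∀ n, d n ≠ 0 := by
    intro n h0
    rw [hd] at h0
    obtain ⟨i, hi, hoi⟩ := Finset.lcm_eq_zero_iff.mp h0
    exact hford i hoi
  have hdvd : ∀ i n, i ≤ n → orderOf (f i) ∣ d n := fun i n hin =>
    Finset.dvd_lcm (Finset.mem_range.mpr (Nat.lt_succ_of_le hin))
  -- there is an element of H of order exactly d n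
  have hzeta : ∀ n, ∃ ζ ∈ H, orderOf ζ = d n := by
    intro n
    set Hn : Subgroup Lˣ := H ⊓ (powMonoidHom (d n) : Lˣ →* Lˣ).ker with hHn
    have key : ∀ g : Hn, g ^ d n = 1 := by
      intro g
      have hg2 : (g : Lˣ) ∈ (powMonoidHom (d n) : Lˣ →* Lˣ).ker :=
        (Subgroup.mem_inf.mp g.2).2
      rw [MonoidHom.mem_ker, powMonoidHom_apply] at hg2
      exact Subtype.ext (by push_cast; exact hg2)
    have hEE : Monoid.ExponentExists Hn := ⟨d n, Nat.pos_of_ne_zero (hd0 n), key⟩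
    have hle : Monoid.exponent Hn ∣ d n := Monoid.exponent_dvd_of_forall_pow_eq_one key
    have hge : d n ∣ Monoid.exponent Hn := by
      rw [hd]
      apply Finset.lcm_dvd
      intro i hi
      have him : i ≤ n := Nat.lt_succ_iff.mp (Finset.mem_range.mp hi)
      have hmem : f i ∈ Hn := by
        rw [hHn, Subgroup.mem_inf]
        refine ⟨hfH i, ?_⟩
        rw [MonoidHom.mem_ker, powMonoidHom_apply]
        exact orderOf_dvd_iff_pow_eq_one.mp (hdvd i n him)
      rw [← Subgroup.orderOf_mk (H := Hn) (f i) hmem]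
      exact Monoid.order_dvd_exponent _
    have hexp : Monoid.exponent Hn = d n := Nat.dvd_antisymm hle hge
    obtain ⟨g, hg⟩ := Monoid.exists_orderOf_eq_exponent hEE
    refine ⟨(g : Lˣ), (Subgroup.mem_inf.mp g.2).1, ?_⟩
    rw [Subgroup.orderOf_coe g, hg, hexp]
  -- any d n-th root of unity is in H
  have hroots : ∀ n (w : Lˣ), w ^ d n = 1 → w ∈ H := by
    intro n w hw
    obtain ⟨ζ, hζH, hζord⟩ := hzeta n
    have hprim : IsPrimitiveRoot ((ζ : Lˣ) : L) (d n) := by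
      rw [IsPrimitiveRoot.coe_units_iff, ← hζord]
      exact IsPrimitiveRoot.orderOf ζ
    haveI : NeZero (d n) := ⟨hd0 n⟩
    have hwpow : ((w : Lˣ) : L) ^ d n = 1 := by
      have h1 := congrArg Units.val hw
      rwa [Units.val_pow_eq_pow_val, Units.val_one] at h1
    obtain ⟨i, _, hi⟩ := hprim.eq_pow_of_pow_eq_one hwpow
    have : ζ ^ i = w := Units.ext (by push_cast; exact hi)
    exact this ▸ H.pow_mem hζH i
  -- the sequence
  refine ⟨fun _ => 1, fun n => p ^ n * d n, fun n => one_ne_zero, ?_, ?_, ?_⟩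
  · intro n
    exact Nat.one_le_iff_ne_zero.mpr (Nat.mul_ne_zero (pow_ne_zero n hp0) (hd0 n))
  · -- basic: converges to 1 in the (X-1)-topology over K[X]
    have hfun : (fun n => C ((1 : K)) * X ^ (p ^ n * d n)) = fun n => (X : K[X]) ^ (p ^ n * d n) := by
      funext n; rw [C_1, one_mul]
    rw [hfun, show (X - 1 : K[X]) = X - C 1 by rw [C_1]]
    exact ptendsto_of_eventually_pow_eq_one d (1 : K) one_ne_zero 0 (fun n _ => one_pow _)
  · -- ℓ(E) = H
    ext lam
    have hfun : (fun n => C (algebraMap K L (1 : K)) * X ^ (p ^ n * d n))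
        = fun n => (X : L[X]) ^ (p ^ n * d n) := by
      funext n; rw [map_one, map_one, one_mul]
    constructor
    · intro hmem
      have h : PTendsto (Ideal.span {X - C lam}) (fun n => (X : L[X]) ^ (p ^ n * d n)) 1 := by
        rw [← hfun]; exact hmem
      obtain ⟨hlam0, n, hn⟩ := eventually_pow_eq_one_of_ptendsto d
        (fun n => Nat.one_le_iff_ne_zero.mpr (hd0 n)) lam h
      have hu : IsUnit lam := IsUnit.of_pow_eq_one hn (hd0 n)
      refine ⟨hu.unit, ?_, hu.unit_spec⟩
      apply hroots n
      ext
      push_cast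
      rw [hu.unit_spec]
      exact hn
    · rintro ⟨w, hwH, rfl⟩
      obtain ⟨m, hm⟩ : ∃ m, f m = w := by
        have : w ∈ (H : Set Lˣ) := hwH
        rw [hf] at this; exact this
      have hpow : ∀ n, m ≤ n → ((w : Lˣ) : L) ^ d n = 1 := by
        intro n hn
        have h1 : w ^ d n = 1 := orderOf_dvd_iff_pow_eq_one.mp (hm ▸ hdvd m n hn)
        have h2 := congrArg Units.val h1
        rwa [Units.val_pow_eq_pow_val, Units.val_one] at h2
      have h := ptendsto_of_eventually_pow_eq_one (p := p) d ((w : Lˣ) : L) (Units.ne_zero w) m hpow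
      show _root_.PTendsto (Ideal.span {X - C ((w : Lˣ) : L)})
        (fun n => C (algebraMap K L (1 : K)) * X ^ (p ^ n * d n)) 1
      rw [hfun]
      exact h

end
end
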